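/- arXiv:math/0108185 — 3 statements merged into one kernel-verified Lean document; each statement's English description precedes it below -/
import Mathlib

section
/- Let G ⊂ U(V) be a finite complex reflection group, H a reflection hyperplane with pointwise stabilizer G_H of order e_H, and χ_H the restriction of the determinant character to G_H. If a polynomial p on V transforms under G_H according to the character χ_H^{-i} for some i ∈ {1, …, e_H − 1}, then p is divisible by α_H^i, where α_H ∈ V* is a linear functional with kernel H. -/
set_option maxHeartbeats 1000000

open MvPolynomial

private lemma degree_one_eq_single {n : ℕ} {d : Fin n →₀ ℕ} (hd : d.degree = 1) :
    ∃ j, d = Finsupp.single j 1 := by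
  have hd0 : d ≠ 0 := by
    rintro rfl; simp [Finsupp.degree] at hd
  obtain ⟨j, hj⟩ := Finsupp.ne_iff.mp hd0
  simp only [Finsupp.coe_zero, Pi.zero_apply] at hj
  have hjs : j ∈ d.support := Finsupp.mem_support_iff.mpr hj
  have hj1 : d j ≤ 1 := by
    have h1 : d j ≤ ∑ z ∈ d.support, d z := by
      simpa using Finset.single_le_sum (f := fun i => d i) (fun _ _ => Nat.zero_le _) hjs
    rw [Finsupp.degree_apply] at hd
    omega
  refine ⟨j, ?_⟩
  ext k
  rcases eq_or_ne k j with rfl | hk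
  · simp only [Finsupp.single_eq_same]; omega
  · rw [Finsupp.single_eq_of_ne' (Ne.symm hk)]
    by_contra hk0
    have hks : k ∈ d.support := Finsupp.mem_support_iff.mpr hk0
    have hsub : ({j, k} : Finset (Fin n)) ⊆ d.support := by
      intro z hz; simp at hz; rcases hz with rfl | rfl <;> assumption
    have h2 : d j + d k ≤ d.degree := by
      rw [Finsupp.degree_apply]
      calc d j + d k = ∑ z ∈ ({j, k} : Finset (Fin n)), d z := (Finset.sum_pair (Ne.symm hk)).symm
      _ ≤ _ := Finset.sum_le_sum_of_subset hsub
    omega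

private lemma linear_rep {n : ℕ} {α : MvPolynomial (Fin n) ℂ} (hα1 : α.IsHomogeneous 1) :
    α = ∑ j, C (α.coeff (Finsupp.single j 1)) * X j := by
  apply MvPolynomial.ext
  intro m
  rw [MvPolynomial.coeff_sum]
  simp only [coeff_C_mul, coeff_X']
  by_cases hm : ∃ j, m = Finsupp.single j 1
  · obtain ⟨j, rfl⟩ := hm
    rw [Finset.sum_eq_single j]
    · simp
    · intro k _ hk
      rw [if_neg, mul_zero]
      intro hkj
      exact hk (Finsupp.single_left_injective one_ne_zero hkj)
    · intro h; exact absurd (Finset.mem_univ j) h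
  · rw [hα1.coeff_eq_zero, Finset.sum_eq_zero]
    · intro k _
      rw [if_neg, mul_zero]
      intro hkm; exact hm ⟨k, hkm.symm⟩
    · intro hdeg
      exact hm (degree_one_eq_single hdeg)

private lemma aeval_eq_eval' {n : ℕ} (x : Fin n → ℂ) (p : MvPolynomial (Fin n) ℂ) :
    aeval x p = eval x p := by
  rw [aeval_def, Algebra.algebraMap_self]; rfl

private lemma eval_bind {n : ℕ} (x : Fin n → ℂ) (s : Fin n → MvPolynomial (Fin n) ℂ)
    (P : MvPolynomial (Fin n) ℂ) :
    eval x (bind₁ s P) = eval (fun k => eval x (s k)) P := by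
  have h := aeval_bind₁ (S := ℂ) x s P
  simpa [aeval_eq_eval'] using h

private noncomputable def linSub {n : ℕ}
    (L : EuclideanSpace ℂ (Fin n) →ₗ[ℂ] EuclideanSpace ℂ (Fin n)) :
    Fin n → MvPolynomial (Fin n) ℂ :=
  fun k => ∑ j, C (L (EuclideanSpace.single j 1) k) * X j

private lemma euclid_sum_apply {n m : ℕ} (s : Finset (Fin m))
    (v : Fin m → EuclideanSpace ℂ (Fin n)) (k : Fin n) :
    (∑ j ∈ s, v j) k = ∑ j ∈ s, v j k := by
  classical
  induction s using Finset.induction_on with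
  | empty => rfl
  | insert _ _ h ih => rw [Finset.sum_insert h, Finset.sum_insert h, ← ih]; rfl

private lemma eval_linSub {n : ℕ}
    (L : EuclideanSpace ℂ (Fin n) →ₗ[ℂ] EuclideanSpace ℂ (Fin n))
    (x : EuclideanSpace ℂ (Fin n)) (P : MvPolynomial (Fin n) ℂ) :
    eval x (bind₁ (linSub L) P) = eval (L x) P := by
  rw [eval_bind]
  have hfun : (fun k => eval x (linSub L k)) = (L x : Fin n → ℂ) := by
    funext k
    simp only [linSub, map_sum, eval_mul, eval_C, eval_X]
    have hx : x = ∑ j, x j • EuclideanSpace.single j (1 : ℂ) := by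
      ext k
      rw [euclid_sum_apply]
      simp [EuclideanSpace.single_apply]
    conv_rhs => rw [hx]
    rw [map_sum, euclid_sum_apply]
    apply Finset.sum_congr rfl
    intro j _
    simp [mul_comm]
  rw [hfun]

private lemma eval_linear_comb {n : ℕ} {α : MvPolynomial (Fin n) ℂ} (hα1 : α.IsHomogeneous 1)
    (x y : EuclideanSpace ℂ (Fin n)) (c : ℂ) :
    eval (x + c • y) α = eval x α + c * eval y α := by
  rw [linear_rep hα1]
  simp only [map_sum, eval_mul, eval_C, eval_X]
  have hxy : ∀ j, (x + c • y) j = x j + c * y j := fun j => rfl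
  rw [Finset.mul_sum, ← Finset.sum_add_distrib]
  apply Finset.sum_congr rfl
  intro j _
  rw [hxy j]
  ring

private lemma X_dvd_of_vanishing {n : ℕ} {q : MvPolynomial (Fin n) ℂ} (c : Fin n)
    (h : ∀ x : Fin n → ℂ, x c = 0 → eval x q = 0) : X c ∣ q := by
  classical
  set f : Fin n → MvPolynomial (Fin n) ℂ := fun k => if k = c then 0 else X k with hf
  have hφ : bind₁ f q = 0 := by
    apply MvPolynomial.funext
    intro x
    rw [eval_bind, map_zero]
    apply h
    · simp [hf]
  have key : ∀ r : MvPolynomial (Fin n) ℂ, X c ∣ r - bind₁ f r := by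
    intro r
    induction r using MvPolynomial.induction_on' with
    | monomial u a =>
      rw [bind₁_monomial]
      by_cases huc : u c = 0
      · have : ∀ i ∈ u.support, f i ^ u i = X i ^ u i := by
          intro i hi
          have : i ≠ c := fun hic => (Finsupp.mem_support_iff.mp hi) (hic ▸ huc)
          simp [hf, this]
        rw [Finset.prod_congr rfl this]
        have hme : C a * ∏ x ∈ u.support, X x ^ u x = monomial u a := by
          rw [monomial_eq, Finsupp.prod]
        rw [hme]
        simp
      · have hcs : c ∈ u.support := Finsupp.mem_support_iff.mpr huc
        rw [Finset.prod_eq_zero hcs]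
        · rw [mul_zero, sub_zero]
          refine ⟨monomial (u - Finsupp.single c 1) a, ?_⟩
          have huu : Finsupp.single c 1 + (u - Finsupp.single c 1) = u := by
            ext k
            rcases eq_or_ne k c with rfl | hk
            · simp only [Finsupp.add_apply, Finsupp.single_eq_same, Finsupp.tsub_apply]
              omega
            · simp [Finsupp.single_eq_of_ne' (Ne.symm hk), Finsupp.tsub_apply]
          rw [X, monomial_mul, one_mul, huu]
        · simp [hf, huc]
    | add p q' hp hq' =>
      rw [map_add]
      have : p + q' - (bind₁ f p + bind₁ f q') = (p - bind₁ f p) + (q' - bind₁ f q') := by ring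
      rw [this]
      exact dvd_add hp hq'
  have := key q
  rwa [hφ, sub_zero] at this

private lemma dvd_of_vanishing {n : ℕ} {α : MvPolynomial (Fin n) ℂ}
    (hα1 : α.IsHomogeneous 1) (hα0 : α ≠ 0) {r : MvPolynomial (Fin n) ℂ}
    (hr : ∀ x : Fin n → ℂ, eval x α = 0 → eval x r = 0) : α ∣ r := by
  classical
  set a : Fin n → ℂ := fun j => α.coeff (Finsupp.single j 1) with ha
  obtain ⟨c, hc⟩ : ∃ c, a c ≠ 0 := by
    by_contra hall
    push_neg at hall
    apply hα0
    rw [linear_rep hα1]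
    apply Finset.sum_eq_zero
    intro j _
    rw [show α.coeff (Finsupp.single j 1) = a j from rfl, hall j]
    simp
  set β : MvPolynomial (Fin n) ℂ := ∑ j ∈ Finset.univ.erase c, C (a j) * X j with hβ
  have hαeq : α = C (a c) * X c + β := by
    rw [linear_rep hα1, hβ, ← Finset.add_sum_erase _ _ (Finset.mem_univ c)]
  set s : Fin n → MvPolynomial (Fin n) ℂ :=
    fun k => if k = c then C (a c)⁻¹ * (X c - β) else X k with hs
  set t : Fin n → MvPolynomial (Fin n) ℂ :=
    fun k => if k = c then C (a c) * X c + β else X k with ht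
  have hsβ : bind₁ s β = β := by
    rw [hβ, map_sum]
    apply Finset.sum_congr rfl
    intro j hj
    have hjc : j ≠ c := Finset.ne_of_mem_erase hj
    simp [hs, hjc]
  have htβ : bind₁ t β = β := by
    rw [hβ, map_sum]
    apply Finset.sum_congr rfl
    intro j hj
    have hjc : j ≠ c := Finset.ne_of_mem_erase hj
    simp [ht, hjc]
  have hts : ∀ P, bind₁ t (bind₁ s P) = P := by
    intro P
    rw [bind₁_bind₁]
    have : (fun i => bind₁ t (s i)) = X := by
      funext i
      rcases eq_or_ne i c with rfl | hic
      · simp only [hs, if_pos rfl, map_mul, map_sub, bind₁_C_right, bind₁_X_right, htβ]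
        rw [ht]
        simp only [if_pos rfl, if_true]
        rw [add_sub_cancel_right, ← mul_assoc, ← C_mul, inv_mul_cancel₀ hc]
        simp
      · simp [hs, hic, ht]
    rw [this]
    simp [bind₁_X_left]
  have hSα : bind₁ s α = X c := by
    rw [hαeq]
    simp only [map_add, map_mul, bind₁_C_right, bind₁_X_right, hsβ]
    rw [hs]
    simp only [if_pos rfl, if_true]
    rw [← mul_assoc, ← C_mul, mul_inv_cancel₀ hc]
    simp
  have hXdvd : X c ∣ bind₁ s r := by
    apply X_dvd_of_vanishing
    intro x hx
    rw [eval_bind]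
    apply hr
    have : eval (fun k => eval x (s k)) α = eval x (bind₁ s α) := (eval_bind x s α).symm
    rw [this, hSα, eval_X, hx]
  obtain ⟨w, hw⟩ := hXdvd
  refine ⟨bind₁ t w, ?_⟩
  have : bind₁ t (bind₁ s r) = bind₁ t (X c * w) := by rw [hw]
  rw [hts r, map_mul, bind₁_X_right] at this
  rw [this]
  congr 1
  rw [ht]
  simp only [if_pos rfl, if_true]
  exact hαeq.symm

/-- If a polynomial `p` transforms under the cyclic pointwise stabilizer
`G_H` (of order `e_H`) of a reflection hyperplane `H` according to the character
`χ_H^{-i}` (where `χ_H` is the restriction of the determinant character) for some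
`i ∈ {1,…,e_H−1}`, then `p` is divisible by `α_H^i`, where `α_H` is a linear form with
kernel `H`. -/
theorem stmt1 (n : ℕ)
    (G : Subgroup (EuclideanSpace ℂ (Fin n) ≃ₗᵢ[ℂ] EuclideanSpace ℂ (Fin n))) [Finite G]
    -- `G` is a complex reflection group: it is generated by its complex reflections
    (hreflgen : Subgroup.closure
      {x : EuclideanSpace ℂ (Fin n) ≃ₗᵢ[ℂ] EuclideanSpace ℂ (Fin n) | x ∈ G ∧
        IsOfFinOrder x ∧
        Module.finrank ℂ (LinearMap.ker (x.toLinearEquiv.toLinearMap - LinearMap.id)) =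
          n - 1} = G)
    (H : Submodule ℂ (EuclideanSpace ℂ (Fin n)))
    (hhyp : Module.finrank ℂ H = n - 1)
    (GH : Subgroup (EuclideanSpace ℂ (Fin n) ≃ₗᵢ[ℂ] EuclideanSpace ℂ (Fin n)))
    -- `G_H` is the pointwise stabilizer of `H` in `G`
    (hGH : ∀ x, x ∈ GH ↔ x ∈ G ∧ ∀ v ∈ H, x v = v)
    -- `H` is a reflection hyperplane
    (hGHne : GH ≠ ⊥)
    (eH : ℕ) (heH : eH = Nat.card GH)
    -- a linear functional `α_H` with kernel `H`
    (α : MvPolynomial (Fin n) ℂ) (hα1 : α.IsHomogeneous 1) (hα0 : α ≠ 0)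
    (hker : ∀ x : EuclideanSpace ℂ (Fin n), eval x α = 0 ↔ x ∈ H)
    (i : ℕ) (hi1 : 1 ≤ i) (hi2 : i ≤ eH - 1)
    (p : MvPolynomial (Fin n) ℂ)
    -- `p` transforms under `G_H` according to `χ_H^{-i}`, i.e. `p^g = det(g)^{-i} p`
    (hp : ∀ g : GH, ∀ x : EuclideanSpace ℂ (Fin n),
      eval ((g : EuclideanSpace ℂ (Fin n) ≃ₗᵢ[ℂ] EuclideanSpace ℂ (Fin n))⁻¹ x) p =
        (((LinearEquiv.det
            (g : EuclideanSpace ℂ (Fin n) ≃ₗᵢ[ℂ] EuclideanSpace ℂ (Fin n)).toLinearEquiv :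
              ℂˣ) : ℂ))⁻¹ ^ i * eval x p) :
    α ^ i ∣ p := by
  classical
  obtain ⟨g₁, hg₁GH, hg₁ne⟩ := GH.bot_or_exists_ne_one.resolve_left hGHne
  have hn : 1 ≤ n := by
    by_contra hn
    push_neg at hn
    interval_cases n
    apply hg₁ne
    ext v i
    exact i.elim0
  have hcompl : IsCompl H Hᗮ := Submodule.isCompl_orthogonal_of_hasOrthogonalProjection
  have hrank_bot : Module.finrank ℂ ↥Hᗮ = 1 := by
    have h1 := Submodule.finrank_add_finrank_orthogonal (K := H)
    rw [hhyp] at h1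
    have h2 : Module.finrank ℂ (EuclideanSpace ℂ (Fin n)) = n := finrank_euclideanSpace_fin
    omega
  obtain ⟨v₀, hv₀ne, hv₀span⟩ := finrank_eq_one_iff'.mp hrank_bot
  set u : EuclideanSpace ℂ (Fin n) := (v₀ : EuclideanSpace ℂ (Fin n)) with hu
  have hu_mem : u ∈ Hᗮ := v₀.2
  have hu_ne : u ≠ 0 := fun h => hv₀ne (Subtype.ext h)
  have hdecomp : ∀ x : EuclideanSpace ℂ (Fin n), ∃ h ∈ H, ∃ c : ℂ, x = h + c • u := by
    intro x
    have hx : x ∈ H ⊔ Hᗮ := by rw [hcompl.sup_eq_top]; trivial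
    obtain ⟨h, hh, z, hz, rfl⟩ := Submodule.mem_sup.mp hx
    obtain ⟨c, hc⟩ := hv₀span ⟨z, hz⟩
    refine ⟨h, hh, c, ?_⟩
    have : c • u = z := congrArg Subtype.val hc
    rw [this]
  set bH : Module.Basis (Fin (n-1)) ℂ ↥H := Module.finBasisOfFinrankEq ℂ ↥H hhyp with hbH
  set bU : Module.Basis (Fin 1) ℂ ↥Hᗮ := FiniteDimensional.basisSingleton (Fin 1) hrank_bot v₀ hv₀ne with hbU
  set e := Submodule.prodEquivOfIsCompl H Hᗮ hcompl with he
  set b : Module.Basis (Fin (n-1) ⊕ Fin 1) ℂ (EuclideanSpace ℂ (Fin n)) := (bH.prod bU).map e with hb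
  have hb_inl : ∀ i, b (Sum.inl i) = (bH i : EuclideanSpace ℂ (Fin n)) := by
    intro i
    rw [hb, Module.Basis.map_apply, Module.Basis.prod_apply]
    simp [he, Submodule.coe_prodEquivOfIsCompl']
  have hb_inr : ∀ i, b (Sum.inr i) = u := by
    intro i
    rw [hb, Module.Basis.map_apply, Module.Basis.prod_apply]
    simp [he, Submodule.coe_prodEquivOfIsCompl', hbU, FiniteDimensional.basisSingleton_apply, hu]
  have hlam : ∀ g : GH, ∃ lam : ℂ,
      (g : EuclideanSpace ℂ (Fin n) ≃ₗᵢ[ℂ] EuclideanSpace ℂ (Fin n)) u = lam • u ∧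
      ((LinearEquiv.det
          (g : EuclideanSpace ℂ (Fin n) ≃ₗᵢ[ℂ] EuclideanSpace ℂ (Fin n)).toLinearEquiv :
        ℂˣ) : ℂ) = lam := by
    intro g
    have hfix : ∀ v ∈ H, (g : EuclideanSpace ℂ (Fin n) ≃ₗᵢ[ℂ] EuclideanSpace ℂ (Fin n)) v = v :=
      ((hGH _).mp g.2).2
    have hHbot : ∀ w ∈ Hᗮ,
        (g : EuclideanSpace ℂ (Fin n) ≃ₗᵢ[ℂ] EuclideanSpace ℂ (Fin n)) w ∈ Hᗮ := by
      intro w hw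
      rw [Submodule.mem_orthogonal]
      intro h hh
      have h1 : (inner ℂ ((g : EuclideanSpace ℂ (Fin n) ≃ₗᵢ[ℂ] EuclideanSpace ℂ (Fin n)) h)
          ((g : EuclideanSpace ℂ (Fin n) ≃ₗᵢ[ℂ] EuclideanSpace ℂ (Fin n)) w) : ℂ)
          = inner ℂ h w := LinearIsometryEquiv.inner_map_map _ h w
      rw [hfix h hh] at h1
      rw [h1]
      exact hw h hh
    obtain ⟨lam, hlam_u⟩ : ∃ lam : ℂ,
        (g : EuclideanSpace ℂ (Fin n) ≃ₗᵢ[ℂ] EuclideanSpace ℂ (Fin n)) u = lam • u := by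
      obtain ⟨c, hc⟩ := hv₀span ⟨_, hHbot u hu_mem⟩
      exact ⟨c, (congrArg Subtype.val hc).symm⟩
    refine ⟨lam, hlam_u, ?_⟩
    set dv : (Fin (n-1) ⊕ Fin 1) → ℂ := Sum.elim (fun _ => (1:ℂ)) (fun _ => lam) with hdv
    have hgb : ∀ j, (g : EuclideanSpace ℂ (Fin n) ≃ₗᵢ[ℂ] EuclideanSpace ℂ (Fin n)) (b j)
        = dv j • b j := by
      rintro (i | i)
      · rw [hb_inl i, hfix _ (bH i).2]
        simp [hdv]
      · rw [hb_inr i, hlam_u]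
        simp [hdv]
    have hmat : LinearMap.toMatrix b b
        ((g : EuclideanSpace ℂ (Fin n) ≃ₗᵢ[ℂ] EuclideanSpace ℂ (Fin n)).toLinearEquiv :
          EuclideanSpace ℂ (Fin n) →ₗ[ℂ] EuclideanSpace ℂ (Fin n)) = Matrix.diagonal dv := by
      ext i j
      rw [LinearMap.toMatrix_apply]
      have : ((g : EuclideanSpace ℂ (Fin n) ≃ₗᵢ[ℂ] EuclideanSpace ℂ (Fin n)).toLinearEquiv :
          EuclideanSpace ℂ (Fin n) →ₗ[ℂ] EuclideanSpace ℂ (Fin n)) (b j)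
          = dv j • b j := hgb j
      rw [this, map_smul, Module.Basis.repr_self]
      rcases eq_or_ne i j with rfl | hij
      · simp [Matrix.diagonal_apply_eq]
      · simp [Matrix.diagonal_apply_ne _ hij, Finsupp.single_apply, Ne.symm hij]
    have hdet : LinearMap.det
        ((g : EuclideanSpace ℂ (Fin n) ≃ₗᵢ[ℂ] EuclideanSpace ℂ (Fin n)).toLinearEquiv :
          EuclideanSpace ℂ (Fin n) →ₗ[ℂ] EuclideanSpace ℂ (Fin n)) = lam := by
      rw [← LinearMap.det_toMatrix b, hmat, Matrix.det_diagonal]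
      rw [Fintype.prod_sum_type]
      simp [hdv]
    rw [LinearEquiv.coe_det]
    exact hdet
  have hGHle : GH ≤ G := fun x hx => ((hGH x).mp hx).1
  haveI hfinGH : Finite GH := by
    have hinj : Function.Injective (fun g : GH => (⟨(g : _), hGHle g.2⟩ : G)) := by
      intro a b hab
      simp only [Subtype.mk.injEq] at hab
      exact Subtype.ext hab
    exact Finite.of_injective _ hinj
  set d : GH →* ℂ :=
    { toFun := fun g => ((LinearEquiv.det
        (g : EuclideanSpace ℂ (Fin n) ≃ₗᵢ[ℂ] EuclideanSpace ℂ (Fin n)).toLinearEquiv : ℂˣ) : ℂ)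
      map_one' := by
        show ((LinearEquiv.det
          ((1 : GH) : EuclideanSpace ℂ (Fin n) ≃ₗᵢ[ℂ] EuclideanSpace ℂ (Fin n)).toLinearEquiv :
            ℂˣ) : ℂ) = 1
        have : ((1 : GH) : EuclideanSpace ℂ (Fin n) ≃ₗᵢ[ℂ] EuclideanSpace ℂ (Fin n)).toLinearEquiv
            = LinearEquiv.refl ℂ (EuclideanSpace ℂ (Fin n)) := rfl
        rw [this]
        simp
      map_mul' := by
        intro a b
        show ((LinearEquiv.det
          ((a * b : GH) : EuclideanSpace ℂ (Fin n) ≃ₗᵢ[ℂ] EuclideanSpace ℂ (Fin n)).toLinearEquiv :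
            ℂˣ) : ℂ) = _ * _
        have : ((a * b : GH) : EuclideanSpace ℂ (Fin n) ≃ₗᵢ[ℂ] EuclideanSpace ℂ (Fin n)).toLinearEquiv
            = (a : EuclideanSpace ℂ (Fin n) ≃ₗᵢ[ℂ] EuclideanSpace ℂ (Fin n)).toLinearEquiv
              * (b : EuclideanSpace ℂ (Fin n) ≃ₗᵢ[ℂ] EuclideanSpace ℂ (Fin n)).toLinearEquiv := rfl
        rw [this, map_mul]
        simp } with hd
  have hdapp : ∀ g : GH, d g = ((LinearEquiv.det
      (g : EuclideanSpace ℂ (Fin n) ≃ₗᵢ[ℂ] EuclideanSpace ℂ (Fin n)).toLinearEquiv : ℂˣ) : ℂ) :=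
    fun g => rfl
  have hdne : ∀ g : GH, d g ≠ 0 := by
    intro g
    rw [hdapp g]
    exact Units.ne_zero _
  have hdinj : Function.Injective d := by
    rw [injective_iff_map_eq_one]
    intro g hg1
    obtain ⟨lam, hlam_u, hlam_det⟩ := hlam g
    rw [hdapp g] at hg1
    rw [hg1] at hlam_det
    rw [← hlam_det, one_smul] at hlam_u
    have hfix : ∀ v ∈ H, (g : EuclideanSpace ℂ (Fin n) ≃ₗᵢ[ℂ] EuclideanSpace ℂ (Fin n)) v = v :=
      ((hGH _).mp g.2).2
    have : (g : EuclideanSpace ℂ (Fin n) ≃ₗᵢ[ℂ] EuclideanSpace ℂ (Fin n)) = 1 := by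
      ext v
      obtain ⟨h, hh, c, rfl⟩ := hdecomp v
      rw [map_add, hfix h hh, map_smul, hlam_u]
      rfl
    exact Subtype.ext this
  haveI : IsCyclic GH := isCyclic_of_subgroup_isDomain d hdinj
  obtain ⟨g0, hg0⟩ := IsCyclic.exists_generator (α := GH)
  have horder : orderOf g0 = Nat.card GH := orderOf_eq_card_of_forall_mem_zpowers hg0
  have heH1 : 1 ≤ Nat.card GH :=
    Nat.one_le_iff_ne_zero.mpr (Nat.card_ne_zero.mpr ⟨⟨1, GH.one_mem⟩, hfinGH⟩)
  have hdetpow : ∀ m : ℕ, 0 < m → m < Nat.card GH → d g0 ^ m ≠ 1 := by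
    intro m hm1 hm2 hcontra
    have h1 : d (g0 ^ m) = 1 := by rw [map_pow, hcontra]
    have h2 : g0 ^ m = 1 := hdinj (by rw [h1, map_one])
    have h3 : orderOf g0 ∣ m := orderOf_dvd_of_pow_eq_one h2
    rw [horder] at h3
    exact absurd (Nat.le_of_dvd hm1 h3) (not_le.mpr hm2)
  -- inverse action facts
  have hfix_inv : ∀ g : GH, ∀ v ∈ H,
      (g : EuclideanSpace ℂ (Fin n) ≃ₗᵢ[ℂ] EuclideanSpace ℂ (Fin n))⁻¹ v = v := by
    intro g v hv
    have hfix : (g : EuclideanSpace ℂ (Fin n) ≃ₗᵢ[ℂ] EuclideanSpace ℂ (Fin n)) v = v :=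
      ((hGH _).mp g.2).2 v hv
    conv_lhs => rw [← hfix]
    rw [LinearIsometryEquiv.coe_inv]
    exact LinearIsometryEquiv.symm_apply_apply _ _
  have hinv_u : ∀ g : GH, ∀ lam : ℂ, lam ≠ 0 →
      (g : EuclideanSpace ℂ (Fin n) ≃ₗᵢ[ℂ] EuclideanSpace ℂ (Fin n)) u = lam • u →
      (g : EuclideanSpace ℂ (Fin n) ≃ₗᵢ[ℂ] EuclideanSpace ℂ (Fin n))⁻¹ u = lam⁻¹ • u := by
    intro g lam hlne hgu
    have h1 : (g : EuclideanSpace ℂ (Fin n) ≃ₗᵢ[ℂ] EuclideanSpace ℂ (Fin n))⁻¹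
        ((g : EuclideanSpace ℂ (Fin n) ≃ₗᵢ[ℂ] EuclideanSpace ℂ (Fin n)) u) = u := by
      rw [LinearIsometryEquiv.coe_inv]
      exact LinearIsometryEquiv.symm_apply_apply _ _
    rw [hgu, map_smul] at h1
    have h2 : lam⁻¹ • (lam • ((g : EuclideanSpace ℂ (Fin n) ≃ₗᵢ[ℂ] EuclideanSpace ℂ (Fin n))⁻¹ u))
        = lam⁻¹ • u := by rw [h1]
    rwa [smul_smul, inv_mul_cancel₀ hlne, one_smul] at h2
  -- the substitution associated with g⁻¹
  set sg : GH → (Fin n → MvPolynomial (Fin n) ℂ) := fun g =>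
    linSub (((g : EuclideanSpace ℂ (Fin n) ≃ₗᵢ[ℂ] EuclideanSpace ℂ (Fin n))⁻¹).toLinearEquiv.toLinearMap) with hsg
  have heval_sg : ∀ (g : GH) (x : EuclideanSpace ℂ (Fin n)) (P : MvPolynomial (Fin n) ℂ),
      eval x (bind₁ (sg g) P)
        = eval ((g : EuclideanSpace ℂ (Fin n) ≃ₗᵢ[ℂ] EuclideanSpace ℂ (Fin n))⁻¹ x) P := by
    intro g x P
    rw [hsg]
    exact eval_linSub _ x P
  -- the transformation law of α
  have hSα : ∀ g : GH, bind₁ (sg g) α = C (d g)⁻¹ * α := by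
    intro g
    obtain ⟨lam, hlam_u, hlam_det⟩ := hlam g
    have hlamne : lam ≠ 0 := by
      rw [← hlam_det]; exact Units.ne_zero _
    have hdg : d g = lam := hlam_det
    apply MvPolynomial.funext
    intro x0
    obtain ⟨x, rfl⟩ : ∃ x : EuclideanSpace ℂ (Fin n), (x : Fin n → ℂ) = x0 := ⟨WithLp.toLp 2 x0, rfl⟩
    rw [heval_sg g x α]
    obtain ⟨h, hh, c, hx⟩ := hdecomp x
    rw [hx]
    have hginv : (g : EuclideanSpace ℂ (Fin n) ≃ₗᵢ[ℂ] EuclideanSpace ℂ (Fin n))⁻¹ (h + c • u)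
        = h + (c * lam⁻¹) • u := by
      rw [map_add, map_smul, hfix_inv g h hh, hinv_u g lam hlamne hlam_u, smul_smul]
    rw [hginv]
    have hh0 : eval (h : EuclideanSpace ℂ (Fin n)) α = 0 := (hker h).mpr hh
    rw [eval_linear_comb hα1 h u (c * lam⁻¹), eval_mul, eval_C,
      eval_linear_comb hα1 h u c, hh0, hdg]
    ring
  -- main induction
  have claim : ∀ j : ℕ, j ≤ eH - 1 → ∀ q : MvPolynomial (Fin n) ℂ,
      (∀ g : GH, ∀ x : EuclideanSpace ℂ (Fin n),
        eval ((g : EuclideanSpace ℂ (Fin n) ≃ₗᵢ[ℂ] EuclideanSpace ℂ (Fin n))⁻¹ x) q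
          = (d g)⁻¹ ^ j * eval x q) → α ^ j ∣ q := by
    intro j
    induction j with
    | zero => intro _ q _; simpa using one_dvd q
    | succ j ih =>
      intro hj q hq
      have hj' : j ≤ eH - 1 := le_trans (Nat.le_succ j) hj
      -- q vanishes on H
      have hvan : ∀ x : Fin n → ℂ, eval x α = 0 → eval x q = 0 := by
        intro x0 hx
        obtain ⟨x, rfl⟩ : ∃ x : EuclideanSpace ℂ (Fin n), (x : Fin n → ℂ) = x0 := ⟨WithLp.toLp 2 x0, rfl⟩
        have hxH : x ∈ H := (hker x).mp hx
        have hfx : (g0 : EuclideanSpace ℂ (Fin n) ≃ₗᵢ[ℂ] EuclideanSpace ℂ (Fin n))⁻¹ x = x :=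
          hfix_inv g0 x hxH
        have h1 := hq g0 x
        rw [hfx] at h1
        by_contra hq0
        have hc1 : (d g0)⁻¹ ^ (j + 1) = 1 := by
          have h2 : (d g0)⁻¹ ^ (j + 1) * eval x q = 1 * eval x q := by
            rw [← h1, one_mul]
          exact mul_right_cancel₀ hq0 h2
        have hc2 : d g0 ^ (j + 1) = 1 := by
          rw [inv_pow, inv_eq_one] at hc1
          exact hc1
        have : j + 1 < Nat.card GH := by omega
        exact hdetpow (j + 1) (Nat.succ_pos j) this hc2
      obtain ⟨q', rfl⟩ := dvd_of_vanishing hα1 hα0 hvan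
      -- polynomial transformation law for q
      have hpoly : ∀ g : GH, bind₁ (sg g) (α * q') = C ((d g)⁻¹ ^ (j+1)) * (α * q') := by
        intro g
        apply MvPolynomial.funext
        intro x0
        obtain ⟨x, rfl⟩ : ∃ x : EuclideanSpace ℂ (Fin n), (x : Fin n → ℂ) = x0 := ⟨WithLp.toLp 2 x0, rfl⟩
        rw [heval_sg g x, hq g x]
        simp [eval_mul, eval_C]
      -- transformation law of q'
      have hq' : ∀ g : GH, ∀ x : EuclideanSpace ℂ (Fin n),
          eval ((g : EuclideanSpace ℂ (Fin n) ≃ₗᵢ[ℂ] EuclideanSpace ℂ (Fin n))⁻¹ x) q'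
            = (d g)⁻¹ ^ j * eval x q' := by
        intro g
        have hpg := hpoly g
        rw [map_mul, hSα g] at hpg
        have hC : C ((d g)⁻¹ ^ (j+1)) * (α * q')
            = C (d g)⁻¹ * (α * (C ((d g)⁻¹ ^ j) * q')) := by
          rw [pow_succ, C_mul]
          ring
        rw [hC] at hpg
        have hCassoc : C (d g)⁻¹ * α * bind₁ (sg g) q'
            = C (d g)⁻¹ * (α * bind₁ (sg g) q') := by ring
        rw [hCassoc] at hpg
        have hCne : (C (d g)⁻¹ : MvPolynomial (Fin n) ℂ) ≠ 0 := by
          rw [Ne, MvPolynomial.C_eq_zero]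
          exact inv_ne_zero (hdne g)
        have h2 := mul_left_cancel₀ hCne hpg
        have h3 := mul_left_cancel₀ hα0 h2
        intro x
        rw [← heval_sg g x q', h3, eval_mul, eval_C]
      obtain ⟨w, hw⟩ := ih hj' q' hq'
      refine ⟨w, ?_⟩
      rw [hw, pow_succ]
      ring
  -- conclusion
  apply claim i hi2 p
  intro g x
  rw [hp g x, hdapp g]
end

section
/- Let G be a finite complex reflection group and τ an irreducible representation of G. The scalar c_τ(k) (value of the central element z(k) on τ) is identically zero as a function of the parameters k if and only if τ is the trivial representation. -/
open Finset

lemma trace_idem_aux {V : Type*} [AddCommGroup V] [Module ℂ V] [FiniteDimensional ℂ V]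
    (f : V →ₗ[ℂ] V) (hf : f ∘ₗ f = f) :
    ∃ n : ℕ, LinearMap.trace ℂ V f = (n : ℂ) ∧ (n = 0 → f = 0) := by
  obtain ⟨p, hp⟩ := (LinearMap.isProj_iff_isIdempotentElem f).mpr hf
  refine ⟨Module.finrank ℂ p, hp.trace, fun h0 => ?_⟩
  have hbot : p = ⊥ := Submodule.finrank_eq_zero.mp h0
  ext v
  have := hp.map_mem v
  rw [hbot] at this
  simpa using this

/-- For an irreducible representation `τ` of a finite complex reflection
group, the scalar `c_τ(k)` of the central element `z(k)` on `τ` vanishes identically as a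
function of the parameters `k` if and only if `τ` is the trivial representation. -/
theorem stmt5 {W : Type*} [Group W] [Fintype W] [DecidableEq W]
    {Hyp : Type*} [Fintype Hyp] [MulAction W Hyp]
    (GH : Hyp → Subgroup W) [∀ H, DecidablePred (· ∈ GH H)]
    (hGHconj : ∀ (g : W) (H : Hyp), GH (g • H) = (GH H).map (MulAut.conj g).toMonoidHom)
    -- `G` is generated by the cyclic stabilizers `G_H`
    (hgen : Subgroup.closure (⋃ H : Hyp, (GH H : Set W)) = ⊤)
    (χ : Hyp → W → ℂ)
    (hχ : ∀ (g : W) (H : Hyp) (h : W), χ (g • H) (g * h * g⁻¹) = χ H h)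
    -- `χ_H` is a faithful (hence generating) character of the cyclic group `G_H`
    (hχmul : ∀ H : Hyp, ∀ h h' : W, h ∈ GH H → h' ∈ GH H → χ H (h * h') = χ H h * χ H h')
    (hχone : ∀ H : Hyp, χ H 1 = 1)
    (hχinj : ∀ H : Hyp, Set.InjOn (χ H) (GH H))
    (e : Hyp → ℕ) (he : ∀ H, e H = Nat.card (GH H))
    -- an irreducible finite-dimensional representation `τ` of `W`
    {Vτ : Type*} [AddCommGroup Vτ] [Module ℂ Vτ] [FiniteDimensional ℂ Vτ] [Nontrivial Vτ]
    (ρ : Representation ℂ W Vτ)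
    (hirr : ∀ U : Submodule ℂ Vτ, (∀ (g : W), ∀ v ∈ U, ρ g v ∈ U) → U = ⊥ ∨ U = ⊤) :
    (∀ k : Hyp → ℕ → ℂ, (∀ (g : W) (H : Hyp) (i : ℕ), k (g • H) i = k H i) →
      ∀ c : ℂ,
      (∀ v : Vτ,
        (∑ H : Hyp, ∑ i ∈ Finset.Ico 1 (e H),
          ((e H : ℂ) * k H i) • ((e H : ℂ)⁻¹ •
            ∑ h ∈ Finset.univ.filter (· ∈ GH H), χ H h ^ i • ρ h)) v = c • v) →
      c = 0) ↔
    (∀ g : W, ρ g = 1) := by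
  classical
  have hepos : ∀ H, 0 < e H := fun H => by rw [he]; exact Nat.card_pos
  have hene : ∀ H, (e H : ℂ) ≠ 0 := fun H => Nat.cast_ne_zero.mpr (hepos H).ne'
  have hcard : ∀ H, (univ.filter (· ∈ GH H)).card = e H := fun H => by
    rw [he H, Nat.card_eq_fintype_card, Fintype.card_subtype]
  have hχpow : ∀ H, ∀ h ∈ GH H, ∀ n : ℕ, χ H (h ^ n) = χ H h ^ n := by
    intro H h hh n
    induction n with
    | zero => simpa using hχone H
    | succ n ih => rw [pow_succ, pow_succ, hχmul H _ _ (pow_mem hh n) hh, ih]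
  have hχroot : ∀ H, ∀ h ∈ GH H, χ H h ^ e H = 1 := by
    intro H h hh
    have h1 : h ^ e H = 1 := by
      have : (⟨h, hh⟩ : GH H) ^ e H = 1 := by rw [he]; exact pow_card_eq_one'
      have := congrArg (Subtype.val) this
      simpa using this
    rw [← hχpow H h hh, h1, hχone]
  have hχeq1 : ∀ H, ∀ h ∈ GH H, (χ H h = 1 ↔ h = 1) := fun H h hh =>
    ⟨fun h1 => hχinj H hh (one_mem _) (by rw [h1, hχone]), fun h1 => by rw [h1, hχone]⟩
  constructor
  · -- forward direction
    intro hyp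
    have main : ∀ H₀ : Hyp, ∀ h₀ ∈ GH H₀, ρ h₀ = 1 := by
      intro H₀ h₀ hh₀
      set Orb : Finset Hyp := univ.filter (fun H => ∃ g : W, g • H₀ = H) with hOrbdef
      have hOrbmem : ∀ (g : W) (H : Hyp), H ∈ Orb → g • H ∈ Orb := by
        rintro g H hH
        simp only [hOrbdef, mem_filter, mem_univ, true_and] at hH ⊢
        obtain ⟨g', rfl⟩ := hH
        exact ⟨g * g', mul_smul g g' H₀⟩
      have hH₀Orb : H₀ ∈ Orb := by
        simp only [hOrbdef, mem_filter, mem_univ, true_and]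
        exact ⟨1, one_smul _ _⟩
      set k : Hyp → ℕ → ℂ := fun H _ => if ∃ g : W, g • H₀ = H then 1 else 0 with hkdef
      have hk : ∀ (g : W) (H : Hyp) (i : ℕ), k (g • H) i = k H i := by
        intro g H i
        simp only [hkdef]
        congr 1
        refine propext ⟨?_, ?_⟩
        · rintro ⟨g', hg'⟩
          exact ⟨g⁻¹ * g', by rw [mul_smul, hg', inv_smul_smul]⟩
        · rintro ⟨g', hg'⟩
          exact ⟨g * g', by rw [mul_smul, hg']⟩
      set Q : Hyp → (Vτ →ₗ[ℂ] Vτ) := fun H => ∑ h ∈ univ.filter (· ∈ GH H), ρ h with hQdef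
      -- left translation invariance of Q
      have htrans : ∀ H : Hyp, ∀ h ∈ GH H, ρ h * Q H = Q H := by
        intro H h hh
        simp only [hQdef, Finset.mul_sum]
        refine Finset.sum_bij' (fun h' _ => h * h') (fun h' _ => h⁻¹ * h') ?_ ?_ ?_ ?_ ?_
        · intro a ha
          simp only [mem_filter, mem_univ, true_and] at ha ⊢
          exact mul_mem hh ha
        · intro a ha
          simp only [mem_filter, mem_univ, true_and] at ha ⊢
          exact mul_mem (inv_mem hh) ha
        · intro a _; group
        · intro a _; group
        · intro a _; rw [← map_mul]
      -- conjugation of Q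
      have hQconj : ∀ (g : W) (H : Hyp), ρ g * Q H = Q (g • H) * ρ g := by
        intro g H
        simp only [hQdef, Finset.mul_sum, Finset.sum_mul]
        refine Finset.sum_bij' (fun h _ => g * h * g⁻¹) (fun h _ => g⁻¹ * h * g) ?_ ?_ ?_ ?_ ?_
        · intro a ha
          simp only [mem_filter, mem_univ, true_and] at ha ⊢
          rw [hGHconj]
          exact ⟨a, ha, rfl⟩
        · intro a ha
          simp only [mem_filter, mem_univ, true_and] at ha ⊢
          rw [hGHconj] at ha
          obtain ⟨b, hb, rfl⟩ := ha
          simpa [MulAut.conj_apply, mul_assoc] using hb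
        · intro a _; group
        · intro a _; group
        · intro a _
          rw [← map_mul, ← map_mul]
          congr 1
          group
      have heconj : ∀ (g : W) (H : Hyp), e (g • H) = e H := by
        intro g H
        rw [he, he, hGHconj]
        exact (Nat.card_congr
          ((GH H).equivMapOfInjective _ (MulAut.conj g).injective).toEquiv).symm
      set B : Vτ →ₗ[ℂ] Vτ := ∑ H ∈ Orb, ((e H : ℂ) • 1 - Q H) with hBdef
      -- geometric sums
      have hgeo : ∀ H : Hyp, ∀ h ∈ GH H,
          (∑ i ∈ Finset.Ico 1 (e H), χ H h ^ i) = (if h = 1 then (e H : ℂ) else 0) - 1 := by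
        intro H h hh
        have hrange : ∑ i ∈ Finset.range (e H), χ H h ^ i
            = (if h = 1 then (e H : ℂ) else 0) := by
          by_cases h1 : h = 1
          · subst h1
            simp [hχone H]
          · have hx1 : χ H h ≠ 1 := fun hc => h1 ((hχeq1 H h hh).mp hc)
            rw [geom_sum_eq hx1, hχroot H h hh]
            simp [h1]
        have : ∑ i ∈ Finset.Ico 1 (e H), χ H h ^ i
            = (∑ i ∈ Finset.range (e H), χ H h ^ i) - 1 := by
          rw [Finset.range_eq_Ico,
            ← Finset.sum_Ico_consecutive _ (Nat.zero_le 1) (hepos H)]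
          simp
        rw [this, hrange]
      -- the operator equals B
      have hopB : (∑ H : Hyp, ∑ i ∈ Finset.Ico 1 (e H),
          ((e H : ℂ) * k H i) • ((e H : ℂ)⁻¹ •
            ∑ h ∈ Finset.univ.filter (· ∈ GH H), χ H h ^ i • ρ h)) = B := by
        rw [hBdef, ← Finset.sum_subset (Finset.subset_univ Orb) (by
          intro H _ hH
          simp only [hOrbdef, mem_filter, mem_univ, true_and] at hH
          have : k = fun H _ => if ∃ g : W, g • H₀ = H then 1 else 0 := hkdef
          apply Finset.sum_eq_zero
          intro i _
          rw [this]
          simp [hH])]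
        refine Finset.sum_congr rfl ?_
        intro H hHOrb
        have hkH : ∀ i : ℕ, k H i = 1 := by
          intro i
          simp only [hOrbdef, mem_filter, mem_univ, true_and] at hHOrb
          simp [hkdef, hHOrb]
        calc ∑ i ∈ Finset.Ico 1 (e H), ((e H : ℂ) * k H i) • ((e H : ℂ)⁻¹ •
              ∑ h ∈ Finset.univ.filter (· ∈ GH H), χ H h ^ i • ρ h)
            = ∑ i ∈ Finset.Ico 1 (e H),
              ∑ h ∈ Finset.univ.filter (· ∈ GH H), χ H h ^ i • ρ h := by
              refine Finset.sum_congr rfl fun i _ => ?_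
              rw [hkH i, mul_one, smul_smul, mul_inv_cancel₀ (hene H), one_smul]
          _ = ∑ h ∈ Finset.univ.filter (· ∈ GH H),
              (∑ i ∈ Finset.Ico 1 (e H), χ H h ^ i) • ρ h := by
              rw [Finset.sum_comm]
              exact Finset.sum_congr rfl fun h _ => (Finset.sum_smul).symm
          _ = ∑ h ∈ Finset.univ.filter (· ∈ GH H),
              (((if h = 1 then (e H : ℂ) else 0) - 1) • ρ h) := by
              refine Finset.sum_congr rfl fun h hhm => ?_
              rw [hgeo H h (by simpa using hhm)]
          _ = (e H : ℂ) • 1 - Q H := by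
              rw [hQdef]
              simp only [sub_smul, one_smul]
              rw [Finset.sum_sub_distrib]
              congr 1
              rw [Finset.sum_eq_single_of_mem (1 : W)
                (by simp [one_mem]) (fun b _ hb => by simp [hb])]
              simp [map_one]
      -- B commutes with ρ g
      have hcomm : ∀ g : W, ρ g * B = B * ρ g := by
        intro g
        rw [hBdef, Finset.mul_sum, Finset.sum_mul]
        have hstep : ∀ H ∈ Orb, ρ g * ((e H : ℂ) • 1 - Q H)
            = ((e (g • H) : ℂ) • 1 - Q (g • H)) * ρ g := by
          intro H _
          rw [mul_sub, sub_mul, heconj, hQconj]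
          congr 1
          rw [mul_smul_comm, smul_mul_assoc, mul_one, one_mul]
        rw [Finset.sum_congr rfl hstep]
        refine Finset.sum_bij' (fun H _ => g • H) (fun H _ => g⁻¹ • H) ?_ ?_ ?_ ?_ ?_
        · intro H hH; exact hOrbmem g H hH
        · intro H hH; exact hOrbmem g⁻¹ H hH
        · intro H _; exact inv_smul_smul g H
        · intro H _; exact smul_inv_smul g H
        · intro H _; rfl
      -- Schur: B is a scalar
      obtain ⟨c, hcv⟩ : ∃ c : ℂ, ∀ v : Vτ, B v = c • v := by
        obtain ⟨μ, hμ⟩ := Module.End.exists_eigenvalue (B : Module.End ℂ Vτ)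
        refine ⟨μ, ?_⟩
        have hinv : ∀ (g : W), ∀ v ∈ Module.End.eigenspace B μ,
            ρ g v ∈ Module.End.eigenspace B μ := by
          intro g v hv
          rw [Module.End.mem_eigenspace_iff] at hv ⊢
          have : B (ρ g v) = ρ g (B v) := by
            have := congrArg (fun f => f v) (hcomm g)
            simpa [Module.End.mul_apply] using this.symm
          rw [this, hv, map_smul]
        rcases hirr _ hinv with hbot | htop
        · exact absurd hbot hμ
        · intro v
          have : v ∈ Module.End.eigenspace B μ := htop ▸ Submodule.mem_top
          exact Module.End.mem_eigenspace_iff.mp this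
      have hc0 : c = 0 := hyp k hk c (by rw [hopB]; exact hcv)
      have hB0 : B = 0 := by
        ext v
        rw [hcv v, hc0, zero_smul, LinearMap.zero_apply]
      -- idempotents
      have hQQ : ∀ H : Hyp, Q H * Q H = (e H : ℂ) • Q H := by
        intro H
        have : Q H * Q H = ∑ h ∈ univ.filter (· ∈ GH H), (ρ h * Q H) := by
          rw [hQdef]
          rw [Finset.sum_mul]
        rw [this, Finset.sum_congr rfl (fun h hh => htrans H h (by simpa using hh)),
          Finset.sum_const, hcard H]
        rw [← Nat.cast_smul_eq_nsmul ℂ]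
      set R : Hyp → (Vτ →ₗ[ℂ] Vτ) := fun H => 1 - (e H : ℂ)⁻¹ • Q H with hRdef
      have hRidem : ∀ H : Hyp, R H ∘ₗ R H = R H := by
        intro H
        have : R H * R H = R H := by
          rw [hRdef]
          simp only [sub_mul, mul_sub, one_mul, mul_one, smul_mul_assoc, mul_smul_comm,
            smul_smul, hQQ]
          rw [inv_mul_cancel₀ (hene H), one_smul, sub_self, smul_zero, sub_zero]
        exact this
      have hBR : B = ∑ H ∈ Orb, (e H : ℂ) • R H := by
        rw [hBdef]
        refine Finset.sum_congr rfl fun H _ => ?_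
        rw [hRdef]
        rw [smul_sub, smul_smul, mul_inv_cancel₀ (hene H), one_smul]
      -- traces
      choose n hn hn0 using fun H => trace_idem_aux (R H) (hRidem H)
      have htr : (0 : ℂ) = ((∑ H ∈ Orb, e H * n H : ℕ) : ℂ) := by
        have h1 := congrArg (LinearMap.trace ℂ Vτ) hB0
        rw [hBR, map_sum, map_zero] at h1
        rw [← h1, Nat.cast_sum]
        refine Finset.sum_congr rfl fun H _ => ?_
        rw [map_smul, hn H, smul_eq_mul]
        push_cast
        ring
      have hsum0 : ∑ H ∈ Orb, e H * n H = 0 := by exact_mod_cast htr.symm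
      have hnH₀ : n H₀ = 0 := by
        have := (Finset.sum_eq_zero_iff.mp hsum0) H₀ hH₀Orb
        rcases Nat.mul_eq_zero.mp this with h | h
        · exact absurd h (hepos H₀).ne'
        · exact h
      have hRH₀ : R H₀ = 0 := hn0 H₀ hnH₀
      have hQH₀ : Q H₀ = (e H₀ : ℂ) • 1 := by
        have h2 : (1 : Vτ →ₗ[ℂ] Vτ) = (e H₀ : ℂ)⁻¹ • Q H₀ :=
          sub_eq_zero.mp (by simpa [hRdef] using hRH₀)
        rw [h2, smul_smul, mul_inv_cancel₀ (hene H₀), one_smul]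
      have := htrans H₀ h₀ hh₀
      rw [hQH₀, mul_smul_comm, mul_one] at this
      exact smul_right_injective (Vτ →ₗ[ℂ] Vτ) (hene H₀) this
    -- closure induction
    intro g
    have hg : g ∈ Subgroup.closure (⋃ H : Hyp, (GH H : Set W)) := by
      rw [hgen]; exact Subgroup.mem_top g
    induction hg using Subgroup.closure_induction with
    | mem x hx =>
      obtain ⟨s, ⟨H, rfl⟩, hxs⟩ := hx
      exact main H x hxs
    | one => exact map_one ρ
    | mul x y hx hy ihx ihy => rw [map_mul, ihx, ihy, one_mul]
    | inv x hx ihx =>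
      calc ρ x⁻¹ = ρ x⁻¹ * ρ x := by rw [ihx, mul_one]
        _ = ρ (x⁻¹ * x) := (map_mul ρ _ _).symm
        _ = 1 := by rw [inv_mul_cancel, map_one]
  · -- backward direction
    intro htriv k _ c hc
    have hsum : ∀ H : Hyp, ∀ i ∈ Finset.Ico 1 (e H),
        ∑ h ∈ univ.filter (· ∈ GH H), χ H h ^ i = 0 := by
      intro H i hi
      obtain ⟨hi1, hie⟩ := Finset.mem_Ico.mp hi
      -- find an element with χ^i ≠ 1
      have hex : ∃ h ∈ GH H, χ H h ^ i ≠ 1 := by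
        by_contra hall
        push_neg at hall
        have hsub : (univ.filter (· ∈ GH H)).image (χ H)
            ⊆ (Polynomial.nthRoots i (1 : ℂ)).toFinset := by
          intro x hx
          simp only [Finset.mem_image, mem_filter, mem_univ, true_and] at hx
          obtain ⟨h, hh, rfl⟩ := hx
          rw [Multiset.mem_toFinset, Polynomial.mem_nthRoots hi1]
          exact hall h hh
        have hcard1 : ((univ.filter (· ∈ GH H)).image (χ H)).card = e H := by
          rw [Finset.card_image_of_injOn (fun a ha b hb hab =>
            hχinj H (by simpa using ha) (by simpa using hb) hab), hcard]
        have := Finset.card_le_card hsub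
        rw [hcard1] at this
        have h2 := le_trans (le_trans this (Multiset.toFinset_card_le _))
          (Polynomial.card_nthRoots i 1)
        omega
      obtain ⟨h₀, hh₀, ht⟩ := hex
      set S := ∑ h ∈ univ.filter (· ∈ GH H), χ H h ^ i with hSdef
      have hshift : S = χ H h₀ ^ i * S := by
        rw [hSdef, Finset.mul_sum]
        refine Finset.sum_bij' (fun h _ => h₀⁻¹ * h) (fun h _ => h₀ * h) ?_ ?_ ?_ ?_ ?_
        · intro a ha
          simp only [mem_filter, mem_univ, true_and] at ha ⊢
          exact mul_mem (inv_mem hh₀) ha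
        · intro a ha
          simp only [mem_filter, mem_univ, true_and] at ha ⊢
          exact mul_mem hh₀ ha
        · intro a _; group
        · intro a _; group
        · intro a ha
          simp only [mem_filter, mem_univ, true_and] at ha
          rw [← mul_pow, ← hχmul H _ _ hh₀ (mul_mem (inv_mem hh₀) ha)]
          congr 2
          group
      have : (χ H h₀ ^ i - 1) * S = 0 := by
        rw [sub_mul, one_mul, ← hshift, sub_self]
      rcases mul_eq_zero.mp this with h | h
      · exact absurd (sub_eq_zero.mp h) ht
      · exact h
    have hop0 : ∀ v : Vτ,
        (∑ H : Hyp, ∑ i ∈ Finset.Ico 1 (e H),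
          ((e H : ℂ) * k H i) • ((e H : ℂ)⁻¹ •
            ∑ h ∈ Finset.univ.filter (· ∈ GH H), χ H h ^ i • ρ h)) v = 0 := by
      intro v
      rw [LinearMap.sum_apply]
      refine Finset.sum_eq_zero fun H _ => ?_
      rw [LinearMap.sum_apply]
      refine Finset.sum_eq_zero fun i hi => ?_
      rw [LinearMap.smul_apply, LinearMap.smul_apply, LinearMap.sum_apply]
      have : ∑ h ∈ univ.filter (· ∈ GH H), (χ H h ^ i • ρ h) v = 0 := by
        have : ∀ h ∈ univ.filter (· ∈ GH H), (χ H h ^ i • ρ h) v = χ H h ^ i • v := by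
          intro h _
          rw [LinearMap.smul_apply, htriv h, Module.End.one_apply]
        rw [Finset.sum_congr rfl this, ← Finset.sum_smul, hsum H i hi, zero_smul]
      rw [this, smul_zero, smul_zero]
    obtain ⟨v, hv⟩ := exists_ne (0 : Vτ)
    have := hc v
    rw [hop0 v] at this
    rcases smul_eq_zero.mp this.symm with h | h
    · exact h
    · exact absurd h hv
end

section
/- Let k be a regular parameter for a finite complex reflection group G (i.e. the positive-degree cohomology of the deformed De Rham complex vanishes). The intertwining operator 𝒱(k) characterized by: 𝒱(k) is completely homogeneous, equals the identity in degree 0, commutes with wedging by constant forms, and satisfies d(k)𝒱(k) = 𝒱(k)d(0), is unique and is a G-equivariant linear isomorphism of P ⊗ Λ^• V*; its restriction to P satisfies T_ξ(k)𝒱(k) = 𝒱(k)∂_ξ for all ξ ∈ V. -/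
open MvPolynomial Finset

noncomputable section

/-- Polynomial differential forms (coefficients of the basis forms `dx_T`). -/
abbrev KForm (n : ℕ) := Finset (Fin n) → MvPolynomial (Fin n) ℂ

/-- The basis form `p ⊗ dx_S`. -/
def ksingle {n : ℕ} (S : Finset (Fin n)) (p : MvPolynomial (Fin n) ℂ) : KForm n :=
  fun T => if T = S then p else 0

/-- The De Rham differential `d(0)` on polynomial differential forms. -/
def derham {n : ℕ} (ω : KForm n) : KForm n := fun T =>
  ∑ i ∈ T, ((-1 : ℂ) ^ (T.filter (· < i)).card) • (pderiv i) (ω (T.erase i))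

/-- The deformed differential `d(k)` associated to the Dunkl operators `Top i`:
`T_ξ(k)p = c_ξ(d(k)p)` and `d(k)(p ⊗ ω) = d(k)(p) ∧ ω`. -/
def dkOf {n : ℕ} (Top : Fin n → MvPolynomial (Fin n) ℂ →ₗ[ℂ] MvPolynomial (Fin n) ℂ)
    (ω : KForm n) : KForm n := fun T =>
  ∑ i ∈ T, ((-1 : ℂ) ^ (T.filter (· < i)).card) • Top i (ω (T.erase i))

/-- `ω` lies in `K^l_m = P_m ⊗ Λ^l V*`. -/
def InKlm {n : ℕ} (l m : ℕ) (ω : KForm n) : Prop :=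
  ∀ S : Finset (Fin n), (S.card = l → (ω S).IsHomogeneous m) ∧ (S.card ≠ l → ω S = 0)

/-- The defining properties of the intertwiner `𝒱(k)`: it is completely homogeneous,
equals the identity in degree `0`, commutes with wedging by constant forms, and
intertwines `d(0)` with `d(k)`. -/
def VProps {n : ℕ} (Top : Fin n → MvPolynomial (Fin n) ℂ →ₗ[ℂ] MvPolynomial (Fin n) ℂ)
    (V : KForm n →ₗ[ℂ] KForm n) : Prop :=
  (∀ (l m : ℕ) (ω : KForm n), InKlm l m ω → InKlm l m (V ω)) ∧
  (∀ (S : Finset (Fin n)) (c : ℂ), V (ksingle S (C c)) = ksingle S (C c)) ∧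
  (∀ (p : MvPolynomial (Fin n) ℂ) (S : Finset (Fin n)),
    V (ksingle S p) = ksingle S (V (ksingle ∅ p) ∅)) ∧
  (∀ ω : KForm n, dkOf Top (V ω) = V (derham ω))


namespace Stmt10Aux

variable {n : ℕ}

abbrev P (n : ℕ) := MvPolynomial (Fin n) ℂ

abbrev H (n m : ℕ) := homogeneousSubmodule (Fin n) ℂ m


lemma eq_C_of_isHomogeneous_zero {p : P n} (hp : p.IsHomogeneous 0) :
    p = C (coeff 0 p) := by
  have h := homogeneousComponent_of_mem ((mem_homogeneousSubmodule 0 p).2 hp) (m := 0)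
  rw [homogeneousComponent_zero] at h
  simpa using h.symm

lemma pderiv_comm' (i j : Fin n) (p : P n) :
    pderiv i (pderiv j p) = pderiv j (pderiv i p) := by
  have h1 : ∀ a b : Fin n, pderiv a (pderiv b (X b * X b * 0 + X b : P n)) = 0 := by intro a b; simp
  induction p using MvPolynomial.induction_on with
  | C a => simp
  | add p q hp hq => simp [hp, hq]
  | mul_X p k ih =>
      have h2 : ∀ a b : Fin n, pderiv a (pderiv b (X k : P n)) = 0 := by
        intro a b
        rcases eq_or_ne k b with rfl | h
        · simp
        · simp [pderiv_X_of_ne h]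
      simp only [pderiv_mul, map_add, ih, h2]
      ring

lemma single_add_sub {d : Fin n →₀ ℕ} {i : Fin n} (hdi : d i ≠ 0) :
    Finsupp.single i 1 + (d - Finsupp.single i 1) = d := by
  ext j
  rcases eq_or_ne j i with rfl | hji
  · simp only [Finsupp.add_apply, Finsupp.tsub_apply, Finsupp.single_eq_same]
    omega
  · simp [Finsupp.add_apply, Finsupp.tsub_apply, Finsupp.single_apply, hji.symm]

lemma degree_of_coeff {p : P n} {m : ℕ} (hp : p.IsHomogeneous m) {d : Fin n →₀ ℕ}
    (hd : coeff d p ≠ 0) : ∑ i : Fin n, d i = m := by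
  have h : d.degree = m := by
    rw [Finsupp.degree_eq_weight_one]
    exact hp hd
  rw [← h, Finsupp.degree]
  exact (Finset.sum_subset (Finset.subset_univ _) (by
    intro x _ hx
    simpa using Finsupp.notMem_support_iff.mp hx)).symm

/-- The Euler identity. -/
lemma euler {p : P n} {m : ℕ} (hp : p.IsHomogeneous m) :
    ∑ i : Fin n, X i * pderiv i p = (m : ℂ) • p := by
  conv_lhs => rw [← p.support_sum_monomial_coeff]
  conv_rhs => rw [← p.support_sum_monomial_coeff]
  rw [Finset.smul_sum]
  simp only [map_sum, Finset.mul_sum]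
  rw [Finset.sum_comm]
  refine Finset.sum_congr rfl fun d hd => ?_
  have hcd : coeff d p ≠ 0 := MvPolynomial.mem_support_iff.mp hd
  have key : ∀ i : Fin n, X i * pderiv i (monomial d (coeff d p))
      = ((d i : ℂ)) • monomial d (coeff d p) := by
    intro i
    rw [pderiv_monomial]
    rcases eq_or_ne (d i) 0 with h0 | h0
    · simp [h0]
    · rw [X, monomial_mul, single_add_sub h0, smul_monomial]
      rw [smul_eq_mul]; ring_nf
  rw [Finset.sum_congr rfl fun i _ => key i, ← Finset.sum_smul, ← Nat.cast_sum,
    degree_of_coeff hp hcd]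



lemma isHomogeneous_pderiv {p : P n} {m : ℕ} (hp : p.IsHomogeneous (m + 1)) (i : Fin n) :
    (pderiv i p).IsHomogeneous m := by
  conv => rw [← p.support_sum_monomial_coeff]
  rw [map_sum]
  apply IsHomogeneous.sum
  intro d hd
  rw [pderiv_monomial]
  rcases eq_or_ne (d i) 0 with h0 | h0
  · simp only [h0, Nat.cast_zero, mul_zero, map_zero]
    exact isHomogeneous_zero _ _ _
  · apply isHomogeneous_monomial
    have hdeg : d.degree = m + 1 := by
      rw [Finsupp.degree_eq_weight_one]
      exact hp (MvPolynomial.mem_support_iff.mp hd)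
    have h2 : (Finsupp.single i 1 + (d - Finsupp.single i 1)).degree = m + 1 := by
      rw [show Finsupp.single i 1 + (d - Finsupp.single i 1) = d from ?_, hdeg]
      ext j
      rcases eq_or_ne j i with rfl | hji
      · simp only [Finsupp.add_apply, Finsupp.tsub_apply, Finsupp.single_eq_same]; omega
      · simp [Finsupp.add_apply, Finsupp.tsub_apply, Finsupp.single_apply, hji.symm]
    have h3 : (Finsupp.single i 1).degree + (d - Finsupp.single i 1).degree = m + 1 := by
      rw [← h2]
      simp [Finsupp.degree_eq_weight_one, map_add]
    have h4 : (Finsupp.single (α := Fin n) i 1).degree = 1 := by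
      exact Finsupp.degree_single i 1
    omega

instance fdH (m : ℕ) : FiniteDimensional ℂ (homogeneousSubmodule (Fin n) ℂ m) :=
  Submodule.finiteDimensional_of_le (S₂ := restrictTotalDegree (Fin n) ℂ m)
    (fun p hp => (mem_restrictTotalDegree _ _ _).mpr
      (MvPolynomial.IsHomogeneous.totalDegree_le hp))


attribute [local instance] fdH

section W

variable (Top : Fin n → P n →ₗ[ℂ] P n)

/-- The explicit inverse intertwiner, degree by degree. -/
def Wmap : ℕ → (P n →ₗ[ℂ] P n)
  | 0 => LinearMap.id
  | (m+1) => ((m : ℂ) + 1)⁻¹ •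
      ∑ i : Fin n, (LinearMap.mulLeft ℂ (X i)) ∘ₗ (Wmap m) ∘ₗ (Top i)

lemma Wmap_succ_apply (m : ℕ) (p : P n) :
    Wmap Top (m+1) p = ((m : ℂ) + 1)⁻¹ • ∑ i : Fin n, X i * Wmap Top m (Top i p) := by
  simp [Wmap]

variable (hTdeg : ∀ (i : Fin n) (m : ℕ) (p : P n),
      p.IsHomogeneous (m + 1) → (Top i p).IsHomogeneous m)
variable (hT0 : ∀ (i : Fin n) (c : ℂ), Top i (C c) = 0)
variable (hTcomm : ∀ (i j : Fin n) (p : P n), Top i (Top j p) = Top j (Top i p))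

include hT0 in
lemma Top_of_isHomogeneous_zero {p : P n} (hp : p.IsHomogeneous 0) (i : Fin n) :
    Top i p = 0 := by
  rw [eq_C_of_isHomogeneous_zero hp]; exact hT0 i _

include hTdeg in
lemma Wmap_isHomogeneous {m : ℕ} {p : P n} (hp : p.IsHomogeneous m) :
    (Wmap Top m p).IsHomogeneous m := by
  induction m generalizing p with
  | zero => simpa [Wmap] using hp
  | succ m ih =>
      rw [Wmap_succ_apply]
      rw [← mem_homogeneousSubmodule]
      apply Submodule.smul_mem
      apply Submodule.sum_mem
      intro i _
      rw [mem_homogeneousSubmodule, show m + 1 = 1 + m from by omega]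
      exact (isHomogeneous_X ℂ i).mul (ih (hTdeg i m p hp))

include hTdeg hT0 hTcomm in
/-- key identity : `∂ᵢ ∘ W = W ∘ Tᵢ` on homogeneous polynomials. -/
lemma pderiv_Wmap : ∀ (m : ℕ) (p : P n), p.IsHomogeneous (m+1) → ∀ i : Fin n,
    pderiv i (Wmap Top (m+1) p) = Wmap Top m (Top i p) := by
  intro m
  induction m with
  | zero =>
      intro p hp i
      rw [Wmap_succ_apply]
      simp only [Nat.cast_zero, zero_add, inv_one, one_smul, map_sum, Wmap, LinearMap.id_coe, id]
      have hc : ∀ j, ∃ c : ℂ, Top j p = C c :=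
        fun j => ⟨_, eq_C_of_isHomogeneous_zero (hTdeg j 0 p hp)⟩
      rw [Finset.sum_congr rfl (fun j _ => ?_), Finset.sum_ite_eq' Finset.univ i
        (fun j => Top j p)]
      · simp
      · obtain ⟨c, hcj⟩ := hc j
        rw [pderiv_mul, hcj, pderiv_C, mul_zero, add_zero]
        rcases eq_or_ne j i with rfl | hji
        · rw [pderiv_X_self, one_mul, if_pos rfl]
        · rw [pderiv_X_of_ne hji, zero_mul, if_neg hji]
  | succ m ih =>
      intro p hp i
      rw [Wmap_succ_apply]
      rw [Derivation.map_smul, map_sum]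
      have step : ∀ j : Fin n, pderiv i (X j * Wmap Top (m+1) (Top j p))
          = (if j = i then (1:P n) else 0) * Wmap Top (m+1) (Top j p)
            + X j * Wmap Top m (Top i (Top j p)) := by
        intro j
        rw [pderiv_mul, ih (Top j p) (hTdeg j (m+1) p hp) i]
        congr 1
        rcases eq_or_ne j i with rfl | hji
        · rw [pderiv_X_self, if_pos rfl]
        · rw [pderiv_X_of_ne hji, if_neg hji]
      rw [Finset.sum_congr rfl (fun j _ => step j), Finset.sum_add_distrib]
      have e1 : ∑ j : Fin n, (if j = i then (1:P n) else 0) * Wmap Top (m+1) (Top j p)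
          = Wmap Top (m+1) (Top i p) := by
        rw [Finset.sum_congr rfl (fun j _ => by rw [ite_mul, one_mul, zero_mul]),
          Finset.sum_ite_eq' Finset.univ i]
        simp
      have e2 : ∑ j : Fin n, X j * Wmap Top m (Top i (Top j p))
          = ((m : ℂ) + 1) • Wmap Top (m+1) (Top i p) := by
        rw [Finset.sum_congr rfl (fun j _ => by rw [hTcomm i j p]), Wmap_succ_apply, smul_smul,
          mul_inv_cancel₀ (Nat.cast_add_one_ne_zero m), one_smul]
      rw [e1, e2, smul_add, smul_smul, ← add_smul]
      have hne : ((m:ℂ) + 1 + 1) ≠ 0 := by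
        have : ((m+1 : ℕ) : ℂ) + 1 ≠ 0 := Nat.cast_add_one_ne_zero (m+1)
        push_cast at this
        exact this
      have hsc : ((↑(m + 1) : ℂ) + 1)⁻¹ + ((↑(m + 1) : ℂ) + 1)⁻¹ * ((m : ℂ) + 1) = 1 := by
        push_cast
        field_simp
        ring
      rw [hsc, one_smul]




lemma Wmap_zero (Top : Fin n → P n →ₗ[ℂ] P n) : Wmap Top 0 = LinearMap.id := rfl

section W2

include hTdeg in
/-- The restriction of `Wmap` to the homogeneous component of degree `m`. -/
def Wres (m : ℕ) : H n m →ₗ[ℂ] H n m :=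
  (Wmap Top m).restrict (fun p hp => (mem_homogeneousSubmodule _ _).2
    (Wmap_isHomogeneous Top hTdeg ((mem_homogeneousSubmodule _ _).1 hp)))

lemma Wres_apply (m : ℕ) (x : H n m) : (Wres Top hTdeg m x : P n) = Wmap Top m x := rfl

section hreg
variable (hreg : ∀ ω : KForm n, ω ∅ = 0 → dkOf Top ω = 0 → ∃ η : KForm n, dkOf Top η = ω)

/-- `d(k)` of a form at a singleton. -/
lemma dkOf_singleton (ω : KForm n) (i : Fin n) :
    dkOf Top ω {i} = Top i (ω ∅) := by
  rw [dkOf, Finset.sum_singleton, Finset.erase_singleton]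
  have : ({i} : Finset (Fin n)).filter (· < i) = ∅ := by
    ext x
    simp only [Finset.mem_filter, Finset.mem_singleton, Finset.notMem_empty, iff_false]
    rintro ⟨rfl, h⟩
    exact lt_irrefl x h
  rw [this]
  simp

include hTdeg hT0 in
lemma hcomp_Top (i : Fin n) (f : P n) (m : ℕ) :
    homogeneousComponent m (Top i f) = Top i (homogeneousComponent (m+1) f) := by
  conv_lhs => rw [← sum_homogeneousComponent f]
  rw [map_sum, map_sum]
  have key : ∀ j, homogeneousComponent m (Top i (homogeneousComponent j f))
      = if j = m + 1 then Top i (homogeneousComponent (m+1) f) else 0 := by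
    intro j
    match j with
    | 0 =>
        rw [homogeneousComponent_zero, hT0, map_zero, if_neg (by omega)]
    | (j'+1) =>
        have h1 : (Top i (homogeneousComponent (j'+1) f)).IsHomogeneous j' :=
          hTdeg i j' _ (homogeneousComponent_isHomogeneous (j'+1) f)
        rw [homogeneousComponent_of_mem ((mem_homogeneousSubmodule _ _).2 h1)]
        by_cases h : j' = m
        · subst h; rw [if_pos rfl, if_pos rfl]
        · rw [if_neg (fun hh => h (by omega)), if_neg (by omega)]
  rw [Finset.sum_congr rfl (fun j _ => key j), Finset.sum_ite_eq' (Finset.range _) (m+1)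
    (fun _ => Top i (homogeneousComponent (m+1) f))]
  split
  · rfl
  · next h =>
      rw [Finset.mem_range, not_lt] at h
      rw [homogeneousComponent_eq_zero _ _ (by omega), map_zero]

include hT0 hTcomm hreg in
lemma Wres_bijective : ∀ m : ℕ, Function.Bijective (Wres Top hTdeg m) := by
  intro m
  induction m using Nat.strong_induction_on with
  | _ m ih =>
    match m with
    | 0 =>
        have : ∀ x : H n 0, Wres Top hTdeg 0 x = x := by
          intro x; apply Subtype.ext; rw [Wres_apply, Wmap_zero]; rfl
        exact Function.bijective_iff_has_inverse.mpr ⟨id, fun x => this x, fun x => this x⟩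
    | (m+1) =>
        suffices hs : Function.Surjective (Wres Top hTdeg (m+1)) by
          exact ⟨LinearMap.injective_iff_surjective.mpr hs, hs⟩
        rintro ⟨r, hr⟩
        have hrh : r.IsHomogeneous (m+1) := (mem_homogeneousSubmodule _ _).1 hr
        -- the candidate preimages of the partial derivatives
        obtain ⟨pre, hpre⟩ := Function.Surjective.hasRightInverse (ih m (by omega)).2
        set q : Fin n → H n m := fun j => pre ⟨pderiv j r, (mem_homogeneousSubmodule _ _).2
          (isHomogeneous_pderiv hrh j)⟩ with hq
        have hWq : ∀ j, Wmap Top m (q j : P n) = pderiv j r := by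
          intro j
          exact congrArg Subtype.val (hpre ⟨pderiv j r, (mem_homogeneousSubmodule _ _).2
            (isHomogeneous_pderiv hrh j)⟩)
        have hqh : ∀ j, (q j : P n).IsHomogeneous m := fun j => (q j).2
        -- closedness
        have hcl : ∀ i j, Top i (q j : P n) = Top j (q i : P n) := by
          intro i j
          match m, q, hWq, hqh, ih with
          | 0, q, hWq, hqh, ih =>
              rw [Top_of_isHomogeneous_zero Top hT0 (hqh j) i,
                Top_of_isHomogeneous_zero Top hT0 (hqh i) j]
          | (m'+1), q, hWq, hqh, ih =>
              have hinj := (ih m' (by omega)).1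
              have h1 : Wmap Top m' (Top i (q j : P n)) = Wmap Top m' (Top j (q i : P n)) := by
                rw [← pderiv_Wmap Top hTdeg hT0 hTcomm m' _ (hqh j) i,
                  ← pderiv_Wmap Top hTdeg hT0 hTcomm m' _ (hqh i) j, hWq, hWq, pderiv_comm']
              have := hinj (a₁ := ⟨Top i (q j : P n), (mem_homogeneousSubmodule _ _).2
                  (hTdeg i m' _ (hqh j))⟩)
                (a₂ := ⟨Top j (q i : P n), (mem_homogeneousSubmodule _ _).2
                  (hTdeg j m' _ (hqh i))⟩) (Subtype.ext h1)
              exact congrArg Subtype.val this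
        -- the closed 1-form
        set ω : KForm n := fun S => ∑ j : Fin n, if S = {j} then (q j : P n) else 0 with hω
        have hωsingle : ∀ i, ω {i} = (q i : P n) := by
          intro i
          show (∑ j : Fin n, if ({i} : Finset (Fin n)) = {j} then (q j : P n) else 0) = q i
          simp only [Finset.singleton_inj]
          rw [Finset.sum_ite_eq Finset.univ i (fun j => (q j : P n))]
          simp
        have hωcard : ∀ S : Finset (Fin n), S.card ≠ 1 → ω S = 0 := by
          intro S hS
          rw [hω]
          apply Finset.sum_eq_zero
          intro j _
          rw [if_neg]
          intro h
          apply hS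
          rw [h, Finset.card_singleton]
        have hω0 : ω ∅ = 0 := hωcard ∅ (by simp)
        have hclosed : dkOf Top ω = 0 := by
          funext T
          by_cases hT2 : T.card = 2
          · obtain ⟨a, b, hab, rfl⟩ := Finset.card_eq_two.mp hT2
            -- reduce to ordered case
            have key : ∀ a b : Fin n, a < b → dkOf Top ω {a, b} = 0 := by
              intro a b hab
              have hne : a ≠ b := ne_of_lt hab
              rw [dkOf, Finset.sum_pair hne]
              have hea : ({a, b} : Finset (Fin n)).erase a = {b} := by
                rw [Finset.erase_insert (by simp [hne])]
              have heb : ({a, b} : Finset (Fin n)).erase b = {a} := by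
                rw [Finset.pair_comm, Finset.erase_insert (by simp [hne.symm])]
              have hfa : ({a, b} : Finset (Fin n)).filter (· < a) = ∅ := by
                ext x
                simp only [Finset.mem_filter, Finset.mem_insert, Finset.mem_singleton,
                  Finset.notMem_empty, iff_false, not_and]
                rintro (rfl | rfl)
                · exact lt_irrefl x
                · intro h; exact absurd (h.trans hab) (lt_irrefl x)
              have hfb : ({a, b} : Finset (Fin n)).filter (· < b) = {a} := by
                ext x
                simp only [Finset.mem_filter, Finset.mem_insert, Finset.mem_singleton]
                constructor
                · rintro ⟨rfl | rfl, h⟩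
                  · rfl
                  · exact absurd h (lt_irrefl x)
                · rintro rfl
                  exact ⟨Or.inl rfl, hab⟩
              rw [hea, heb, hfa, hfb, hωsingle, hωsingle]
              simp only [Finset.card_empty, Finset.card_singleton, pow_zero, pow_one, one_smul,
                neg_one_smul]
              rw [hcl a b]
              ring
            rcases lt_or_gt_of_ne hab with h | h
            · exact key a b h
            · rw [Finset.pair_comm]; exact key b a h
          · rw [dkOf]
            apply Finset.sum_eq_zero
            intro i hi
            rw [hωcard (T.erase i) (by
              rw [Finset.card_erase_of_mem hi]
              have : 1 ≤ T.card := Finset.card_pos.mpr ⟨i, hi⟩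
              omega), map_zero, smul_zero]
        obtain ⟨η, hη⟩ := hreg ω hω0 hclosed
        have hp'h : (homogeneousComponent (m+1) (η ∅)).IsHomogeneous (m+1) :=
          homogeneousComponent_isHomogeneous _ _
        have hTopη : ∀ i, Top i (η ∅) = (q i : P n) := by
          intro i
          rw [← dkOf_singleton Top η i, hη, hωsingle]
        have hTopp' : ∀ i, Top i (homogeneousComponent (m+1) (η ∅)) = (q i : P n) := by
          intro i
          rw [← hcomp_Top Top hTdeg hT0 i (η ∅) m, hTopη i,
            homogeneousComponent_of_mem ((q i).2), if_pos rfl]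
        refine ⟨⟨homogeneousComponent (m+1) (η ∅), (mem_homogeneousSubmodule _ _).2 hp'h⟩, ?_⟩
        apply Subtype.ext
        rw [Wres_apply]
        show Wmap Top (m+1) (homogeneousComponent (m+1) (η ∅)) = r
        rw [Wmap_succ_apply, Finset.sum_congr rfl (fun j _ => by rw [hTopp' j, hWq j]),
          euler hrh]
        rw [smul_smul]
        push_cast
        rw [inv_mul_cancel₀ (Nat.cast_add_one_ne_zero m), one_smul]

include hTdeg hT0 hTcomm hreg in
lemma joint_kernel {m : ℕ} {r : P n} (hr : r.IsHomogeneous (m+1))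
    (h : ∀ i, Top i r = 0) : r = 0 := by
  have hs : ∀ i, pderiv i (Wmap Top (m+1) r) = 0 := by
    intro i
    rw [pderiv_Wmap Top hTdeg hT0 hTcomm m r hr i, h i, map_zero]
  have heu := euler (Wmap_isHomogeneous Top hTdeg hr)
  rw [Finset.sum_congr rfl (fun i _ => by rw [hs i, mul_zero]), Finset.sum_const_zero] at heu
  have hW0 : Wmap Top (m+1) r = 0 := by
    have := heu.symm
    rw [smul_eq_zero] at this
    rcases this with h' | h'
    · exact absurd h' (Nat.cast_ne_zero.mpr (Nat.succ_ne_zero m))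
    · exact h'
  have hinj := (Wres_bijective Top hTdeg hT0 hTcomm hreg (m+1)).1
  have := hinj (a₁ := ⟨r, (mem_homogeneousSubmodule _ _).2 hr⟩)
    (a₂ := 0) (by apply Subtype.ext; rw [Wres_apply]; simpa using hW0)
  exact congrArg Subtype.val this

include hTdeg hT0 hTcomm hreg in
lemma v_exists : ∃ v : P n →ₗ[ℂ] P n,
    (∀ (m : ℕ) (p : P n), p.IsHomogeneous m → (v p).IsHomogeneous m) ∧
    (∀ c : ℂ, v (C c) = C c) ∧
    (∀ (i : Fin n) (p : P n), Top i (v p) = v (pderiv i p)) ∧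
    Function.Bijective v := by
  classical
  have bij := Wres_bijective Top hTdeg hT0 hTcomm hreg
  let e : ∀ m : ℕ, H n m ≃ₗ[ℂ] H n m := fun m => LinearEquiv.ofBijective _ (bij m)
  let vm : ℕ → (P n →ₗ[ℂ] P n) := fun m =>
    (H n m).subtype ∘ₗ ((e m).symm : H n m →ₗ[ℂ] H n m) ∘ₗ
      LinearMap.codRestrict (H n m) (homogeneousComponent m)
        (fun p => homogeneousComponent_mem m p)
  have f1 : ∀ (m : ℕ) (p : P n), (vm m p).IsHomogeneous m := fun m p =>
    (mem_homogeneousSubmodule _ _).1 ((e m).symm ⟨homogeneousComponent m p, _⟩).2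
  have f2 : ∀ (m : ℕ) (p : P n), Wmap Top m (vm m p) = homogeneousComponent m p := by
    intro m p
    have h := (e m).apply_symm_apply ⟨homogeneousComponent m p,
      homogeneousComponent_mem m p⟩
    exact congrArg Subtype.val h
  have f3 : ∀ (m : ℕ) (p : P n), homogeneousComponent m p = 0 → vm m p = 0 := by
    intro m p hp
    show ((H n m).subtype ((e m).symm ⟨homogeneousComponent m p, _⟩) : P n) = 0
    have : (⟨homogeneousComponent m p, homogeneousComponent_mem m p⟩ : H n m) = 0 :=
      Subtype.ext hp
    rw [this, map_zero, map_zero]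
  have hstab : ∀ (p : P n) (N : ℕ), p.totalDegree < N →
      ∑ m ∈ Finset.range (p.totalDegree + 1), vm m p = ∑ m ∈ Finset.range N, vm m p := by
    intro p N hN
    apply Finset.sum_subset
    · exact Finset.range_subset_range.mpr (by omega)
    · intro m _ hm
      rw [Finset.mem_range, not_lt] at hm
      exact f3 m p (homogeneousComponent_eq_zero m p (by omega))
  let v : P n →ₗ[ℂ] P n :=
    { toFun := fun p => ∑ m ∈ Finset.range (p.totalDegree + 1), vm m p
      map_add' := by
        intro p q
        set N := max p.totalDegree q.totalDegree + 1 with hN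
        rw [hstab p N (by omega), hstab q N (by omega),
          hstab (p+q) N (by
            have := totalDegree_add p q
            omega)]
        rw [← Finset.sum_add_distrib]
        exact Finset.sum_congr rfl fun m _ => map_add (vm m) p q
      map_smul' := by
        intro c p
        simp only [RingHom.id_apply]
        rw [hstab (c • p) (p.totalDegree + 1) (Nat.lt_succ_of_le (totalDegree_smul_le c p))]
        rw [Finset.smul_sum]
        exact Finset.sum_congr rfl fun m _ => map_smul (vm m) c p }
  have hv : ∀ p : P n, v p = ∑ m ∈ Finset.range (p.totalDegree + 1), vm m p := fun _ => rfl
  have hv_single : ∀ (m : ℕ) (p : P n), p.IsHomogeneous m → v p = vm m p := by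
    intro m p hp
    rw [hv, hstab p (max p.totalDegree m + 1) (by omega)]
    apply Finset.sum_eq_single_of_mem m (Finset.mem_range.mpr (by omega))
    intro j _ hj
    apply f3
    rw [homogeneousComponent_of_mem ((mem_homogeneousSubmodule _ _).2 hp), if_neg hj]
  have hv_mem : ∀ (m : ℕ) (p : P n), p.IsHomogeneous m → (v p).IsHomogeneous m := by
    intro m p hp
    rw [hv_single m p hp]
    exact f1 m p
  have hW_v : ∀ (m : ℕ) (p : P n), p.IsHomogeneous m → Wmap Top m (v p) = p := by
    intro m p hp
    rw [hv_single m p hp, f2,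
      homogeneousComponent_of_mem ((mem_homogeneousSubmodule _ _).2 hp), if_pos rfl]
  have hv_C : ∀ c : ℂ, v (C c) = C c := by
    intro c
    have h := hW_v 0 (C c) (isHomogeneous_C _ _)
    rwa [Wmap_zero] at h
  have hv_T_hom : ∀ (m : ℕ) (i : Fin n) (p : P n), p.IsHomogeneous m →
      Top i (v p) = v (pderiv i p) := by
    intro m i p hp
    match m with
    | 0 =>
        rw [eq_C_of_isHomogeneous_zero hp, hv_C, hT0, pderiv_C, map_zero]
    | (m+1) =>
        have ha : (Top i (v p)).IsHomogeneous m := hTdeg i m _ (hv_mem _ _ hp)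
        have hb : (v (pderiv i p)).IsHomogeneous m := hv_mem m _ (isHomogeneous_pderiv hp i)
        have hWa : Wmap Top m (Top i (v p)) = pderiv i p := by
          rw [← pderiv_Wmap Top hTdeg hT0 hTcomm m (v p) (hv_mem _ _ hp) i, hW_v (m+1) p hp]
        have hWb : Wmap Top m (v (pderiv i p)) = pderiv i p :=
          hW_v m _ (isHomogeneous_pderiv hp i)
        have := (bij m).1 (a₁ := ⟨Top i (v p), (mem_homogeneousSubmodule _ _).2 ha⟩)
          (a₂ := ⟨v (pderiv i p), (mem_homogeneousSubmodule _ _).2 hb⟩)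
          (Subtype.ext (by rw [Wres_apply, Wres_apply]; exact hWa.trans hWb.symm))
        exact congrArg Subtype.val this
  have hv_T : ∀ (i : Fin n) (p : P n), Top i (v p) = v (pderiv i p) := by
    intro i p
    have hdec : p = ∑ m ∈ Finset.range (p.totalDegree + 1), homogeneousComponent m p :=
      (sum_homogeneousComponent p).symm
    conv_lhs => rw [hdec]
    conv_rhs => rw [hdec]
    rw [map_sum, map_sum, map_sum, map_sum]
    exact Finset.sum_congr rfl fun m _ =>
      hv_T_hom m i _ (homogeneousComponent_isHomogeneous m p)
  have hv_inj : Function.Injective v := by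
    intro p q hpq
    have h0 : v (p - q) = 0 := by rw [map_sub, hpq, sub_self]
    have hzero : ∀ m : ℕ, vm m (p - q) = 0 := by
      intro m
      by_cases hm : m < (p-q).totalDegree + 1
      · have h1 : (0 : P n) = ∑ j ∈ Finset.range ((p-q).totalDegree + 1), vm j (p - q) := by
          rw [← hv, h0]
        have h2 := congrArg (homogeneousComponent m) h1
        rw [map_zero, map_sum] at h2
        rw [Finset.sum_congr rfl (fun j _ => homogeneousComponent_of_mem
          ((mem_homogeneousSubmodule _ _).2 (f1 j (p - q)))),
          Finset.sum_ite_eq (Finset.range _) m (fun j => vm j (p-q)),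
          if_pos (Finset.mem_range.mpr hm)] at h2
        exact h2.symm
      · exact f3 m (p - q) (homogeneousComponent_eq_zero m (p-q) (by omega))
    have hc0 : ∀ m : ℕ, homogeneousComponent m (p - q) = 0 := by
      intro m
      rw [← f2 m (p - q), hzero m, map_zero]
    have : p - q = 0 := by
      rw [← sum_homogeneousComponent (p - q)]
      exact Finset.sum_eq_zero fun m _ => hc0 m
    exact sub_eq_zero.mp this
  have hv_surj : Function.Surjective v := by
    intro q
    refine ⟨∑ m ∈ Finset.range (q.totalDegree + 1), Wmap Top m (homogeneousComponent m q), ?_⟩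
    rw [map_sum]
    have key : ∀ m : ℕ, v (Wmap Top m (homogeneousComponent m q)) = homogeneousComponent m q := by
      intro m
      have hx : (homogeneousComponent m q).IsHomogeneous m :=
        homogeneousComponent_isHomogeneous m q
      have hWx : (Wmap Top m (homogeneousComponent m q)).IsHomogeneous m :=
        Wmap_isHomogeneous Top hTdeg hx
      have h1 : Wmap Top m (v (Wmap Top m (homogeneousComponent m q)))
          = Wmap Top m (homogeneousComponent m q) := hW_v m _ hWx
      have := (bij m).1 (a₁ := ⟨v (Wmap Top m (homogeneousComponent m q)),
          (mem_homogeneousSubmodule _ _).2 (hv_mem m _ hWx)⟩)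
        (a₂ := ⟨homogeneousComponent m q, homogeneousComponent_mem m q⟩)
        (Subtype.ext (by rw [Wres_apply, Wres_apply]; exact h1))
      exact congrArg Subtype.val this
    rw [Finset.sum_congr rfl (fun m _ => key m)]
    exact sum_homogeneousComponent q
  exact ⟨v, hv_mem, hv_C, hv_T, hv_inj, hv_surj⟩

include hTdeg hT0 hTcomm hreg in
lemma v_unique (v v' : P n →ₗ[ℂ] P n)
    (h1 : ∀ (m : ℕ) (p : P n), p.IsHomogeneous m → (v p).IsHomogeneous m)
    (h2 : ∀ c : ℂ, v (C c) = C c)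
    (h3 : ∀ (i : Fin n) (p : P n), Top i (v p) = v (pderiv i p))
    (h1' : ∀ (m : ℕ) (p : P n), p.IsHomogeneous m → (v' p).IsHomogeneous m)
    (h2' : ∀ c : ℂ, v' (C c) = C c)
    (h3' : ∀ (i : Fin n) (p : P n), Top i (v' p) = v' (pderiv i p)) :
    v = v' := by
  have hmg : ∀ (m : ℕ) (p : P n), p.IsHomogeneous m → v p = v' p := by
    intro m
    induction m with
    | zero =>
        intro p hp
        rw [eq_C_of_isHomogeneous_zero hp, h2, h2']
    | succ m ih =>
        intro p hp
        have hr : (v p - v' p).IsHomogeneous (m+1) := (h1 _ _ hp).sub (h1' _ _ hp)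
        have hT : ∀ i, Top i (v p - v' p) = 0 := by
          intro i
          rw [map_sub, h3, h3', ih _ (isHomogeneous_pderiv hp i), sub_self]
        have := joint_kernel Top hTdeg hT0 hTcomm hreg hr hT
        exact sub_eq_zero.mp this
  apply LinearMap.ext
  intro p
  have hdec : p = ∑ m ∈ Finset.range (p.totalDegree + 1), homogeneousComponent m p :=
    (sum_homogeneousComponent p).symm
  conv_lhs => rw [hdec]
  conv_rhs => rw [hdec]
  rw [map_sum, map_sum]
  exact Finset.sum_congr rfl fun m _ => hmg m _ (homogeneousComponent_isHomogeneous m p)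

end hreg
end W2
end W

section Forms

lemma derham_singleton (ω : KForm n) (i : Fin n) :
    derham ω {i} = pderiv i (ω ∅) := by
  rw [derham, Finset.sum_singleton, Finset.erase_singleton]
  have : ({i} : Finset (Fin n)).filter (· < i) = ∅ := by
    ext x
    simp only [Finset.mem_filter, Finset.mem_singleton, Finset.notMem_empty, iff_false]
    rintro ⟨rfl, h⟩
    exact lt_irrefl x h
  rw [this]
  simp

/-- `ksingle S` as a linear map. -/
def ksingleL (S : Finset (Fin n)) : MvPolynomial (Fin n) ℂ →ₗ[ℂ] KForm n where
  toFun := ksingle S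
  map_add' p q := by
    funext T
    simp only [ksingle, Pi.add_apply]
    split <;> simp
  map_smul' c p := by
    funext T
    simp only [ksingle, RingHom.id_apply, Pi.smul_apply]
    split <;> simp

@[simp] lemma ksingleL_apply (S : Finset (Fin n)) (p : MvPolynomial (Fin n) ℂ) :
    ksingleL S p = ksingle S p := rfl

lemma ksum (ω : KForm n) : ∑ S : Finset (Fin n), ksingle S (ω S) = ω := by
  funext T
  rw [Finset.sum_apply]
  simp only [ksingle]
  rw [Finset.sum_ite_eq Finset.univ T (fun S => ω S), if_pos (Finset.mem_univ T)]

/-- Componentwise application of a linear map on polynomials. -/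
def Vof (u : MvPolynomial (Fin n) ℂ →ₗ[ℂ] MvPolynomial (Fin n) ℂ) :
    KForm n →ₗ[ℂ] KForm n :=
  LinearMap.pi (fun T => u ∘ₗ LinearMap.proj T)

@[simp] lemma Vof_apply (u : MvPolynomial (Fin n) ℂ →ₗ[ℂ] MvPolynomial (Fin n) ℂ)
    (ω : KForm n) (T : Finset (Fin n)) : Vof u ω T = u (ω T) := rfl

lemma ksingle_self (S : Finset (Fin n)) (p : MvPolynomial (Fin n) ℂ) :
    ksingle S p S = p := by rw [ksingle, if_pos rfl]

lemma ksingle_ne {S T : Finset (Fin n)} (h : T ≠ S) (p : MvPolynomial (Fin n) ℂ) :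
    ksingle S p T = 0 := by rw [ksingle, if_neg h]

lemma InKlm_ksingle {S : Finset (Fin n)} {p : MvPolynomial (Fin n) ℂ} {m : ℕ}
    (hp : p.IsHomogeneous m) : InKlm S.card m (ksingle S p) := by
  intro T
  constructor
  · intro hT
    rcases eq_or_ne T S with rfl | hne
    · rw [ksingle_self]; exact hp
    · rw [ksingle_ne hne]; exact isHomogeneous_zero _ _ _
  · intro hT
    apply ksingle_ne
    intro h
    exact hT (by rw [h])

end Forms

end Stmt10Aux

/-- for a regular parameter `k` (the positive-degree cohomology of the
deformed De Rham complex vanishes), the intertwiner `𝒱(k)` exists, is unique, and is a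
`G`-equivariant linear isomorphism of `P ⊗ Λ^•V*`, whose restriction to `P` satisfies
`T_ξ(k)𝒱(k) = 𝒱(k)∂_ξ`. -/
theorem stmt10 (n : ℕ)
    -- the (commuting) Dunkl operators of `G`, homogeneous of degree −1
    (Top : Fin n → MvPolynomial (Fin n) ℂ →ₗ[ℂ] MvPolynomial (Fin n) ℂ)
    (hTcomm : ∀ (i j : Fin n) (p : MvPolynomial (Fin n) ℂ), Top i (Top j p) = Top j (Top i p))
    (hTdeg : ∀ (i : Fin n) (m : ℕ) (p : MvPolynomial (Fin n) ℂ),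
      p.IsHomogeneous (m + 1) → (Top i p).IsHomogeneous m)
    (hT0 : ∀ (i : Fin n) (c : ℂ), Top i (C c) = 0)
    -- the finite complex reflection group `G`, acting diagonally on `K^•`:
    -- on polynomials by `actP`, on the exterior factor with matrix coefficients `actΛ`
    (G : Type) [Group G] [Finite G]
    (actP : G → MvPolynomial (Fin n) ℂ →ₐ[ℂ] MvPolynomial (Fin n) ℂ)
    (hactPdeg : ∀ (g : G) (m : ℕ) (p : MvPolynomial (Fin n) ℂ),
      p.IsHomogeneous m → (actP g p).IsHomogeneous m)
    (actL : G → Finset (Fin n) → Finset (Fin n) → ℂ)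
    (hactLcard : ∀ (g : G) (S T : Finset (Fin n)), S.card ≠ T.card → actL g S T = 0)
    (actK : G → KForm n → KForm n)
    (hactK : ∀ (g : G) (ω : KForm n) (T : Finset (Fin n)),
      actK g ω T = ∑ S : Finset (Fin n), actL g T S • actP g (ω S))
    (hactK1 : ∀ ω : KForm n, actK 1 ω = ω)
    (hactKmul : ∀ (g h : G) (ω : KForm n), actK g (actK h ω) = actK (g * h) ω)
    -- the differentials are `G`-equivariant
    (hequiv0 : ∀ (g : G) (ω : KForm n), actK g (derham ω) = derham (actK g ω))
    (hequivk : ∀ (g : G) (ω : KForm n), actK g (dkOf Top ω) = dkOf Top (actK g ω))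
    -- `k` is regular: the positive-degree cohomology of `(K^•, d(k))` vanishes
    (hreg : ∀ ω : KForm n, ω ∅ = 0 → dkOf Top ω = 0 → ∃ η : KForm n, dkOf Top η = ω) :
    -- existence
    (∃ V : KForm n →ₗ[ℂ] KForm n, VProps Top V) ∧
    -- uniqueness
    (∀ V V' : KForm n →ₗ[ℂ] KForm n, VProps Top V → VProps Top V' → V = V') ∧
    -- each such `𝒱(k)` is a `G`-equivariant linear isomorphism intertwining `∂_ξ`
    -- with `T_ξ(k)` on `P`
    (∀ V : KForm n →ₗ[ℂ] KForm n, VProps Top V →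
      Function.Bijective V ∧
      (∀ (g : G) (ω : KForm n), actK g (V ω) = V (actK g ω)) ∧
      (∀ (p : MvPolynomial (Fin n) ℂ) (i : Fin n),
        Top i (V (ksingle ∅ p) ∅) = V (ksingle ∅ ((pderiv i) p)) ∅)) := by
  classical
  open Stmt10Aux in
  obtain ⟨v, hv_mem, hv_C, hv_T, hv_bij⟩ :=
    Stmt10Aux.v_exists Top hTdeg hT0 hTcomm hreg
  -- `V ω` is determined componentwise for any `V` satisfying the wedging property
  have Vapply : ∀ V : KForm n →ₗ[ℂ] KForm n,
      (∀ (p : MvPolynomial (Fin n) ℂ) (S : Finset (Fin n)),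
        V (ksingle S p) = ksingle S (V (ksingle ∅ p) ∅)) →
      ∀ (ω : KForm n) (T : Finset (Fin n)), V ω T = V (ksingle ∅ (ω T)) ∅ := by
    intro V h3 ω T
    conv_lhs => rw [← Stmt10Aux.ksum ω]
    rw [show (∑ S : Finset (Fin n), ksingle S (ω S)) = ∑ S : Finset (Fin n),
      Stmt10Aux.ksingleL S (ω S) from rfl, map_sum]
    rw [Finset.sum_apply]
    rw [Finset.sum_congr rfl (fun S _ => by rw [Stmt10Aux.ksingleL_apply, h3 (ω S) S])]
    have : ∀ S : Finset (Fin n), ksingle S (V (ksingle ∅ (ω S)) ∅) T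
        = if T = S then V (ksingle ∅ (ω S)) ∅ else 0 := fun S => rfl
    rw [Finset.sum_congr rfl (fun S _ => this S),
      Finset.sum_ite_eq Finset.univ T (fun S => V (ksingle ∅ (ω S)) ∅),
      if_pos (Finset.mem_univ T)]
  -- extraction of the polynomial-level intertwiner from `VProps`
  have extract : ∀ V : KForm n →ₗ[ℂ] KForm n, VProps Top V →
      (∀ (m : ℕ) (p : MvPolynomial (Fin n) ℂ), p.IsHomogeneous m →
        (((LinearMap.proj ∅ : KForm n →ₗ[ℂ] MvPolynomial (Fin n) ℂ) ∘ₗ V ∘ₗ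
          Stmt10Aux.ksingleL ∅) p).IsHomogeneous m) ∧
      (∀ c : ℂ, ((LinearMap.proj ∅ : KForm n →ₗ[ℂ] MvPolynomial (Fin n) ℂ) ∘ₗ V ∘ₗ
          Stmt10Aux.ksingleL ∅) (C c) = C c) ∧
      (∀ (i : Fin n) (p : MvPolynomial (Fin n) ℂ),
        Top i (((LinearMap.proj ∅ : KForm n →ₗ[ℂ] MvPolynomial (Fin n) ℂ) ∘ₗ V ∘ₗ
          Stmt10Aux.ksingleL ∅) p)
        = ((LinearMap.proj ∅ : KForm n →ₗ[ℂ] MvPolynomial (Fin n) ℂ) ∘ₗ V ∘ₗ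
          Stmt10Aux.ksingleL ∅) (pderiv i p)) := by
    intro V hV
    obtain ⟨hV1, hV2, hV3, hV4⟩ := hV
    have happ : ∀ p : MvPolynomial (Fin n) ℂ,
        ((LinearMap.proj ∅ : KForm n →ₗ[ℂ] MvPolynomial (Fin n) ℂ) ∘ₗ V ∘ₗ
          Stmt10Aux.ksingleL ∅) p = V (ksingle ∅ p) ∅ := fun p => rfl
    refine ⟨?_, ?_, ?_⟩
    · intro m p hp
      rw [happ]
      have h0 : InKlm 0 m (ksingle ∅ p) := by
        have := Stmt10Aux.InKlm_ksingle (S := (∅ : Finset (Fin n))) hp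
        simpa using this
      have := (hV1 0 m _ h0 ∅).1 rfl
      exact this
    · intro c
      rw [happ, hV2 ∅ c, Stmt10Aux.ksingle_self]
    · intro i p
      rw [happ, happ]
      have h4 := congrFun (hV4 (ksingle ∅ p)) {i}
      rw [Stmt10Aux.dkOf_singleton Top, Vapply V hV3 (derham (ksingle ∅ p)) {i},
        Stmt10Aux.derham_singleton, Stmt10Aux.ksingle_self,
        Vapply V hV3 (ksingle ∅ p) ∅, Stmt10Aux.ksingle_self] at h4
      exact h4
  -- `Vof v` satisfies the defining properties
  have hVof_props : VProps Top (Stmt10Aux.Vof v) := by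
    refine ⟨?_, ?_, ?_, ?_⟩
    · intro l m ω hω S
      refine ⟨fun hc => ?_, fun hc => ?_⟩
      · rw [Stmt10Aux.Vof_apply]
        exact hv_mem m _ ((hω S).1 hc)
      · rw [Stmt10Aux.Vof_apply, (hω S).2 hc, map_zero]
    · intro S c
      funext T
      rw [Stmt10Aux.Vof_apply]
      rcases eq_or_ne T S with rfl | hne
      · simp only [Stmt10Aux.ksingle_self, hv_C]
      · rw [Stmt10Aux.ksingle_ne hne, map_zero]
    · intro p S
      funext T
      rw [Stmt10Aux.Vof_apply]
      rcases eq_or_ne T S with rfl | hne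
      · simp only [Stmt10Aux.ksingle_self, Stmt10Aux.Vof_apply]
      · rw [Stmt10Aux.ksingle_ne hne, Stmt10Aux.ksingle_ne hne, map_zero]
    · intro ω
      funext T
      rw [Stmt10Aux.Vof_apply, derham, dkOf, map_sum]
      refine Finset.sum_congr rfl fun i _ => ?_
      rw [Stmt10Aux.Vof_apply, map_smul, hv_T]
  -- uniqueness
  have huniq : ∀ V V' : KForm n →ₗ[ℂ] KForm n, VProps Top V → VProps Top V' → V = V' := by
    intro V V' h h'
    obtain ⟨e1, e2, e3⟩ := extract V h
    obtain ⟨e1', e2', e3'⟩ := extract V' h'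
    have hvv := Stmt10Aux.v_unique Top hTdeg hT0 hTcomm hreg _ _ e1 e2 e3 e1' e2' e3'
    apply LinearMap.ext
    intro ω
    funext T
    rw [Vapply V h.2.2.1 ω T, Vapply V' h'.2.2.1 ω T]
    exact LinearMap.congr_fun hvv (ω T)
  refine ⟨⟨Stmt10Aux.Vof v, hVof_props⟩, huniq, ?_⟩
  intro V hV
  have hVeq : V = Stmt10Aux.Vof v := huniq V _ hV hVof_props
  refine ⟨?_, ?_, ?_⟩
  · -- bijectivity
    rw [hVeq]
    constructor
    · intro ω ω' h
      funext T
      exact hv_bij.1 (congrFun h T)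
    · intro τ
      refine ⟨fun T => Classical.choose (hv_bij.2 (τ T)), ?_⟩
      funext T
      exact Classical.choose_spec (hv_bij.2 (τ T))
  · -- equivariance
    intro g ω
    -- `actK` as a family of linear maps
    let AK : G → KForm n →ₗ[ℂ] KForm n := fun g =>
      { toFun := fun ω T => ∑ S : Finset (Fin n), actL g T S • actP g (ω S)
        map_add' := by
          intro ω ω'
          funext T
          simp only [Pi.add_apply, map_add, smul_add, Finset.sum_add_distrib]
        map_smul' := by
          intro c ω
          funext T
          simp only [Pi.smul_apply, map_smul, RingHom.id_apply]
          rw [Finset.smul_sum]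
          exact Finset.sum_congr rfl fun S _ => smul_comm _ _ _ }
    have hAKapp : ∀ (g : G) (ω : KForm n) (T : Finset (Fin n)),
        AK g ω T = ∑ S : Finset (Fin n), actL g T S • actP g (ω S) := fun _ _ _ => rfl
    have hAK : ∀ (g : G) (ω : KForm n), actK g ω = AK g ω := by
      intro g ω
      funext T
      rw [hactK, hAKapp]
    have hAKinv : ∀ (g : G) (ω : KForm n), AK g⁻¹ (AK g ω) = ω := by
      intro g ω
      rw [← hAK, ← hAK, hactKmul, inv_mul_cancel, hactK1]
    have hAKinv' : ∀ (g : G) (ω : KForm n), AK g (AK g⁻¹ ω) = ω := by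
      intro g ω
      rw [← hAK, ← hAK, hactKmul, mul_inv_cancel, hactK1]
    have hAKsingle : ∀ (g : G) (S : Finset (Fin n)) (p : MvPolynomial (Fin n) ℂ)
        (S₁ : Finset (Fin n)), (AK g (ksingle S p)) S₁ = actL g S₁ S • actP g p := by
      intro g S p S₁
      rw [hAKapp, Finset.sum_eq_single_of_mem S (Finset.mem_univ S)
        (fun b _ hb => by rw [Stmt10Aux.ksingle_ne hb, map_zero, smul_zero]),
        Stmt10Aux.ksingle_self]
    -- orthogonality of the matrix coefficients
    have hb : ∀ T S : Finset (Fin n),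
        ∑ S₁ : Finset (Fin n), actL g⁻¹ T S₁ * actL g S₁ S = if T = S then 1 else 0 := by
      intro T S
      have h := congrFun (hactKmul g⁻¹ g (ksingle S (1 : MvPolynomial (Fin n) ℂ))) T
      rw [inv_mul_cancel, hactK1] at h
      rw [hactK g⁻¹] at h
      rw [Finset.sum_congr rfl (fun S₁ _ => by
        rw [hAK g, hAKsingle g S 1 S₁, map_smul, map_one, map_one, smul_smul])] at h
      rw [← Finset.sum_smul] at h
      have h2 : (ksingle S (1 : MvPolynomial (Fin n) ℂ)) T = C (if T = S then 1 else 0) := by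
        rcases eq_or_ne T S with rfl | hne
        · rw [Stmt10Aux.ksingle_self, if_pos rfl, map_one]
        · rw [Stmt10Aux.ksingle_ne hne, if_neg hne, map_zero]
      rw [h2] at h
      apply MvPolynomial.C_injective (Fin n) ℂ
      rw [← h, smul_eq_C_mul, mul_one]
    have hVT : ∀ (ω : KForm n) (T : Finset (Fin n)), V ω T = v (ω T) := by
      intro ω T
      rw [hVeq]
      rfl
    have hactPC : ∀ (g : G) (c : ℂ), actP g (C c) = C c := by
      intro g c
      have h1 : (C c : MvPolynomial (Fin n) ℂ) = c • 1 := by rw [smul_eq_C_mul, mul_one]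
      rw [h1, map_smul, map_one]
    set Vg : KForm n →ₗ[ℂ] KForm n := AK g⁻¹ ∘ₗ V ∘ₗ AK g with hVgdef
    have hVgapp : ∀ ω : KForm n, Vg ω = AK g⁻¹ (V (AK g ω)) := fun _ => rfl
    have hVgprops : VProps Top Vg := by
      have hInK : ∀ (g : G) (l m : ℕ) (ω : KForm n), InKlm l m ω → InKlm l m (AK g ω) := by
        intro g l m ω hω T
        constructor
        · intro hc
          rw [hAKapp, ← mem_homogeneousSubmodule]
          apply Submodule.sum_mem
          intro S _
          by_cases hS : S.card = l
          · exact Submodule.smul_mem _ _ ((mem_homogeneousSubmodule _ _).2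
              (hactPdeg g m _ ((hω S).1 hS)))
          · rw [(hω S).2 hS, map_zero, smul_zero]
            exact Submodule.zero_mem _
        · intro hc
          rw [hAKapp]
          apply Finset.sum_eq_zero
          intro S _
          by_cases hS : S.card = T.card
          · rw [(hω S).2 (fun hl => hc (by rw [← hS, hl])), map_zero, smul_zero]
          · rw [hactLcard g T S (fun hh => hS hh.symm), zero_smul]
      refine ⟨?_, ?_, ?_, ?_⟩
      · intro l m ω hω
        exact hInK g⁻¹ l m _ (hV.1 l m _ (hInK g l m ω hω))
      · intro S c
        have hconst : ∀ T : Finset (Fin n), ∃ d : ℂ, (AK g (ksingle S (C c))) T = C d := by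
          intro T
          refine ⟨actL g T S * c, ?_⟩
          rw [hAKsingle g S _ T, hactPC, smul_eq_C_mul, ← C_mul]
        have hfix : V (AK g (ksingle S (C c))) = AK g (ksingle S (C c)) := by
          set τ := AK g (ksingle S (C c)) with hτ
          have hτdec : τ = ∑ S' : Finset (Fin n), Stmt10Aux.ksingleL S' (τ S') :=
            (Stmt10Aux.ksum τ).symm
          conv_lhs => rw [hτdec]
          rw [map_sum]
          rw [Finset.sum_congr rfl (fun S' _ => by
            obtain ⟨d, hd⟩ := hconst S'
            rw [Stmt10Aux.ksingleL_apply, hd, hV.2.1 S' d, ← hd])]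
          exact Stmt10Aux.ksum τ
        rw [hVgapp, hfix, hAKinv]
      · intro p S
        have hcomp : ∀ (S T : Finset (Fin n)) (p : MvPolynomial (Fin n) ℂ), Vg (ksingle S p) T
            = (if T = S then (1:ℂ) else 0) • actP g⁻¹ (v (actP g p)) := by
          intro S T p
          rw [hVgapp, hAKapp]
          rw [Finset.sum_congr rfl (fun S₁ _ => by
            rw [hVT, hAKsingle g S p S₁, map_smul, map_smul, smul_smul])]
          rw [← Finset.sum_smul, hb T S]
        funext T
        rw [hcomp S T p]
        have h0 : Vg (ksingle ∅ p) ∅ = actP g⁻¹ (v (actP g p)) := by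
          rw [hcomp ∅ ∅ p, if_pos rfl, one_smul]
        rcases eq_or_ne T S with rfl | hne
        · rw [if_pos rfl, one_smul, Stmt10Aux.ksingle_self, h0]
        · rw [if_neg hne, zero_smul, Stmt10Aux.ksingle_ne hne]
      · intro ω
        calc dkOf Top (Vg ω) = dkOf Top (actK g⁻¹ (V (AK g ω))) := by rw [hVgapp, hAK g⁻¹]
          _ = actK g⁻¹ (dkOf Top (V (AK g ω))) := (hequivk g⁻¹ _).symm
          _ = actK g⁻¹ (V (derham (AK g ω))) := by rw [hV.2.2.2]
          _ = actK g⁻¹ (V (derham (actK g ω))) := by rw [hAK g ω]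
          _ = actK g⁻¹ (V (actK g (derham ω))) := by rw [hequiv0 g ω]
          _ = AK g⁻¹ (V (AK g (derham ω))) := by rw [hAK g (derham ω), hAK g⁻¹]
          _ = Vg (derham ω) := (hVgapp _).symm
    have hV2 := huniq V Vg hV hVgprops
    have h3 : V ω = AK g⁻¹ (V (AK g ω)) := by
      conv_lhs => rw [hV2]
      exact hVgapp ω
    rw [hAK g (V ω), hAK g ω, h3, hAKinv' g]
  · -- the intertwining property on polynomials
    intro p i
    exact ((extract V hV).2.2 i p).symm ▸ rfl
end
end
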